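/- arXiv:2006.12116 — 8 statements merged into one kernel-verified Lean document; each statement's English description precedes it below -/
import Mathlib

section
/- Let q be an odd prime power and a₁,a₂,a₃ nonzero polynomials in 𝔽_q[t]. If the multiplicities v_f(a₁), v_f(a₂), v_f(a₃) of a monic irreducible polynomial f in a₁, a₂, a₃ are all congruent modulo 2, then the equation a₁x₁² + a₂x₂² + a₃x₃² = 0 has a nontrivial solution in the f-adic completion of 𝔽_q(t). -/
set_option synthInstance.maxHeartbeats 1000000
set_option maxHeartbeats 1000000

open IsDedekindDomain Polynomial
open Multiplicative Filter Topology
open scoped WithZero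

lemma zm0_pow_anti {t : ℤᵐ⁰} (ht : t ≤ 1) {m n : ℕ} (h : m ≤ n) : t ^ n ≤ t ^ m := by
  calc t ^ n = t ^ m * t ^ (n - m) := by rw [← pow_add, Nat.add_sub_cancel' h]
    _ ≤ t ^ m * 1 := mul_le_mul_right (pow_le_one' ht _) _
    _ = t ^ m := mul_one _

lemma zm0_exists_pow_lt {t γ : ℤᵐ⁰} (ht : t < 1) (hγ : γ ≠ 0) :
    ∃ N : ℕ, t ^ (N + 1) < γ := by
  rcases eq_or_ne t 0 with rfl | ht0
  · exact ⟨0, by simpa [zero_pow] using zero_lt_iff.mpr hγ⟩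
  obtain ⟨a, rfl⟩ := WithZero.ne_zero_iff_exists.mp ht0
  obtain ⟨b, rfl⟩ := WithZero.ne_zero_iff_exists.mp hγ
  rw [← WithZero.coe_one, WithZero.coe_lt_coe] at ht
  refine ⟨(Multiplicative.toAdd b).natAbs, ?_⟩
  rw [← WithZero.coe_pow, WithZero.coe_lt_coe]
  set A : ℤ := Multiplicative.toAdd a
  set B : ℤ := Multiplicative.toAdd b
  have hA : A < 0 := ht
  have : (B.natAbs + 1 : ℤ) * A < B := by
    have h1 : (B.natAbs + 1 : ℤ) * A ≤ (B.natAbs + 1 : ℤ) * (-1) := by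
      apply mul_le_mul_of_nonneg_left (by omega) (by positivity)
    have h2 : -|B| ≤ B := neg_abs_le B
    have h3 : |B| = (B.natAbs : ℤ) := Int.abs_eq_natAbs B
    linarith
  calc a ^ (B.natAbs + 1) = ofAdd ((B.natAbs + 1 : ℕ) • A) := by
        rw [ofAdd_nsmul, ofAdd_toAdd]
    _ = ofAdd ((B.natAbs + 1 : ℤ) * A) := by rw [nsmul_eq_mul]; norm_num
    _ < ofAdd B := by rwa [Multiplicative.ofAdd_lt]
    _ = b := ofAdd_toAdd b



lemma finfield_isotropic (κ : Type*) [Field κ] [Fintype κ] (b : Fin 3 → κ) :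
    ∃ c : Fin 3 → κ, c ≠ 0 ∧ ∑ i, b i * c i ^ 2 = 0 := by
  classical
  set p := ringChar κ with hp
  have hprime : p.Prime := CharP.char_is_prime κ p
  haveI : CharP κ p := ringChar.charP κ
  set F : MvPolynomial (Fin 3) κ := ∑ i, MvPolynomial.C (b i) * MvPolynomial.X i ^ 2 with hF
  have hdeg : F.totalDegree < Fintype.card (Fin 3) := by
    rw [Fintype.card_fin]
    refine lt_of_le_of_lt (MvPolynomial.totalDegree_finset_sum _ _) ?_
    refine lt_of_le_of_lt (Finset.sup_le fun i _ => ?_) (by norm_num : (2:ℕ) < 3)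
    refine le_trans (MvPolynomial.totalDegree_mul _ _) ?_
    simp [MvPolynomial.totalDegree_C, MvPolynomial.totalDegree_X_pow]
  have hdvd := char_dvd_card_solutions p hdeg
  have heval : ∀ x : Fin 3 → κ, MvPolynomial.eval x F = ∑ i, b i * x i ^ 2 := by
    intro x; simp [hF]
  have h0 : MvPolynomial.eval (0 : Fin 3 → κ) F = 0 := by rw [heval]; simp
  have hcard : 1 < Fintype.card {x : Fin 3 → κ // MvPolynomial.eval x F = 0} := by
    have hpos : 0 < Fintype.card {x : Fin 3 → κ // MvPolynomial.eval x F = 0} :=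
      Fintype.card_pos_iff.mpr ⟨⟨0, h0⟩⟩
    have h1 := Nat.le_of_dvd hpos hdvd
    have h2 := hprime.two_le
    omega
  obtain ⟨⟨c, hc⟩, hne⟩ := Fintype.exists_ne_of_one_lt_card hcard ⟨0, h0⟩
  refine ⟨c, ?_, by rwa [heval] at hc⟩
  intro h; exact hne (Subtype.ext h)


lemma exists_sqrt {L : Type*} [Field L] [Valued L ℤᵐ⁰] [CompleteSpace L]
    (h2 : Valued.v (2 : L) = 1) {z s : L} (hs : Valued.v s = 1)
    (hzs : Valued.v (z - s ^ 2) < 1) : ∃ w : L, w ^ 2 = z := by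
  by_cases hz0 : z - s ^ 2 = 0
  · exact ⟨s, (sub_eq_zero.mp hz0).symm⟩
  set t : ℤᵐ⁰ := Valued.v (z - s ^ 2) with ht
  have ht1 : t < 1 := hzs
  have htle : t ≤ 1 := le_of_lt ht1
  let W : ℕ → L := fun n => Nat.rec s (fun _ wn => (wn + z / wn) / 2) n
  have hW0 : W 0 = s := rfl
  have hWs : ∀ n, W (n + 1) = (W n + z / W n) / 2 := fun n => rfl
  have h2ne : (2 : L) ≠ 0 := by
    intro h; rw [h, map_zero] at h2; exact zero_ne_one h2
  have key : ∀ n, Valued.v (W n) = 1 ∧ Valued.v (z - W n ^ 2) ≤ t ^ (n + 1) := by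
    intro n
    induction n with
    | zero => exact ⟨hs, by rw [hW0, pow_one]⟩
    | succ n ih =>
      obtain ⟨h1, hb⟩ := ih
      have hWne : W n ≠ 0 := by
        intro h; rw [h, map_zero] at h1; exact zero_ne_one h1
      have hv2W : Valued.v (2 * W n) = 1 := by rw [Valuation.map_mul, h2, h1, one_mul]
      have hstep : W (n + 1) = W n + (z - W n ^ 2) / (2 * W n) := by
        rw [hWs n]; field_simp; ring
      have hq : Valued.v ((z - W n ^ 2) / (2 * W n)) ≤ t ^ (n + 1) := by
        rw [map_div₀, hv2W, div_one]; exact hb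
      have hqlt : Valued.v ((z - W n ^ 2) / (2 * W n)) < Valued.v (W n) := by
        rw [h1]
        refine lt_of_le_of_lt hq (lt_of_le_of_lt (zm0_pow_anti htle (Nat.le_add_left 1 n)) ?_)
        rwa [pow_one]
      constructor
      · rw [hstep, Valuation.map_add_eq_of_lt_left _ hqlt, h1]
      · have hfor : z - W (n + 1) ^ 2 = -((z - W n ^ 2) ^ 2 / (2 * W n) ^ 2) := by
          rw [hWs n]; field_simp; ring
        rw [hfor, Valuation.map_neg, map_div₀, map_pow, map_pow, hv2W, one_pow, div_one]
        calc Valued.v (z - W n ^ 2) ^ 2 ≤ (t ^ (n + 1)) ^ 2 := pow_le_pow_left' hb 2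
          _ = t ^ (2 * (n + 1)) := by rw [← pow_mul, mul_comm]
          _ ≤ t ^ (n + 1 + 1) := zm0_pow_anti htle (by omega)
  have hdiff : ∀ n, Valued.v (W (n + 1) - W n) ≤ t ^ (n + 1) := by
    intro n
    obtain ⟨h1, hb⟩ := key n
    have hWne : W n ≠ 0 := by
      intro h; rw [h, map_zero] at h1; exact zero_ne_one h1
    have hv2W : Valued.v (2 * W n) = 1 := by rw [Valuation.map_mul, h2, h1, one_mul]
    have hstep : W (n + 1) - W n = (z - W n ^ 2) / (2 * W n) := by
      rw [hWs n]; field_simp; ring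
    rw [hstep, map_div₀, hv2W, div_one]; exact hb
  have hgap : ∀ n m, n ≤ m → Valued.v (W m - W n) ≤ t ^ (n + 1) := by
    intro n m h
    induction m, h using Nat.le_induction with
    | base => simp
    | succ m hm ihm =>
      have hsplit : W (m + 1) - W n = (W (m + 1) - W m) + (W m - W n) := by ring
      rw [hsplit]
      refine le_trans (Valuation.map_add _ _ _) (max_le ?_ ihm)
      exact le_trans (hdiff m) (zm0_pow_anti htle (by omega))
  have hcauchy : CauchySeq W := by
    rw [(Valued.hasBasis_uniformity L ℤᵐ⁰).cauchySeq_iff]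
    intro γ _
    obtain ⟨N, hN⟩ := zm0_exists_pow_lt ht1
      (γ := MonoidWithZeroHom.ValueGroup₀.embedding γ.1) (by simp)
    refine ⟨N, fun m hm n hn => ?_⟩
    show Valued.v.restrict (W n - W m) < γ.1
    rw [Valuation.restrict_lt_iff_lt_embedding]
    rcases le_total m n with h | h
    · exact lt_of_le_of_lt (le_trans (hgap m n h) (zm0_pow_anti htle (by omega))) hN
    · rw [show W n - W m = -(W m - W n) by ring, Valuation.map_neg]
      exact lt_of_le_of_lt (le_trans (hgap n m h) (zm0_pow_anti htle (by omega))) hN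
  obtain ⟨w, hw⟩ := cauchySeq_tendsto_of_complete hcauchy
  have hlim1 : Tendsto (fun n => z - W n ^ 2) atTop (𝓝 (z - w ^ 2)) :=
    tendsto_const_nhds.sub (hw.pow 2)
  have hlim0 : Tendsto (fun n => z - W n ^ 2) atTop (𝓝 (0 : L)) := by
    rw [Filter.tendsto_def]
    intro sset hsset
    obtain ⟨γ, hγ⟩ := Valued.mem_nhds_zero.mp hsset
    obtain ⟨N, hN⟩ := zm0_exists_pow_lt ht1
      (γ := MonoidWithZeroHom.ValueGroup₀.embedding γ.1) (by simp)
    refine Filter.mem_of_superset (Filter.mem_atTop N) fun n (hn : N ≤ n) => hγ ?_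
    show Valued.v.restrict (z - W n ^ 2) < γ.1
    rw [Valuation.restrict_lt_iff_lt_embedding]
    exact lt_of_le_of_lt (le_trans (key n).2 (zm0_pow_anti htle (by omega))) hN
  have : z - w ^ 2 = 0 := tendsto_nhds_unique hlim1 hlim0
  exact ⟨w, by linear_combination -this⟩


/-- If the multiplicities of a monic irreducible `f` in nonzero polynomials
`a₁, a₂, a₃` over a finite field of odd order are all congruent mod 2, then
`a₁x₁² + a₂x₂² + a₃x₃² = 0` has a nontrivial solution in the `f`-adic completion of `𝔽_q(t)`. -/
theorem stmt0 (Fq : Type) [Field Fq] [Fintype Fq] (hq : Odd (Fintype.card Fq))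
    (f : Polynomial Fq) (hf : f.Monic) (hirr : Irreducible f)
    (a : Fin 3 → Polynomial Fq) (ha : ∀ i, a i ≠ 0)
    (m : Fin 3 → ℕ) (hm : ∀ i, f ^ (m i) ∣ a i ∧ ¬ f ^ (m i + 1) ∣ a i)
    (hpar : ∀ i j, m i % 2 = m j % 2)
    (v : HeightOneSpectrum (Polynomial Fq)) (hv : v.asIdeal = Ideal.span {f}) :
    ∃ x : Fin 3 → v.adicCompletion (RatFunc Fq), x ≠ 0 ∧
      ∑ i, algebraMap (Polynomial Fq) (v.adicCompletion (RatFunc Fq)) (a i) * x i ^ 2 = 0 := by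
  classical
  set L := v.adicCompletion (RatFunc Fq) with hLdef
  set φ : Polynomial Fq →+* L := algebraMap (Polynomial Fq) L with hφdef
  have hf0 : f ≠ 0 := hf.ne_zero
  -- valuation of polynomial images
  have hval : ∀ r : Polynomial Fq, Valued.v (φ r) = v.intValuationDef r := by
    intro r
    rw [hφdef]
    rw [show (algebraMap (Polynomial Fq) L) r
        = (algebraMap (Polynomial Fq) (v.adicCompletion (RatFunc Fq))) r from rfl]
    rw [HeightOneSpectrum.valuedAdicCompletion_eq_valuation,
      HeightOneSpectrum.valuation_of_algebraMap]
    rfl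
  have hunit : ∀ r : Polynomial Fq, ¬ f ∣ r → Valued.v (φ r) = 1 := by
    intro r hr
    rw [hval]
    refine le_antisymm (v.intValuation_le_one r) (not_lt.mp ?_)
    change ¬ v.intValuation r < 1
    rw [HeightOneSpectrum.intValuation_lt_one_iff_dvd, hv,
      span_singleton_dvd_span_singleton_iff_dvd]
    exact hr
  have hφf0 : φ f ≠ 0 := by
    intro h
    have h1 : Valued.v (φ f) = v.intValuationDef f := hval f
    rw [h, map_zero] at h1
    exact v.intValuation_ne_zero f hf0 h1.symm
  -- decomposition a i = f ^ m i * u i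
  have hdecomp : ∀ i, ∃ u : Polynomial Fq, a i = f ^ m i * u ∧ ¬ f ∣ u := by
    intro i
    obtain ⟨u, hu⟩ := (hm i).1
    refine ⟨u, hu, fun hdvd => (hm i).2 ?_⟩
    obtain ⟨w, hw⟩ := hdvd
    exact ⟨w, by rw [hu, hw, pow_succ]; ring⟩
  choose u hu hufree using hdecomp
  -- residue field
  haveI : Fact (Irreducible f) := ⟨hirr⟩
  haveI : Finite (AdjoinRoot f) := by
    have := (AdjoinRoot.powerBasis hf0).finite
    exact Module.finite_of_finite Fq
  haveI : Fintype (AdjoinRoot f) := Fintype.ofFinite _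
  obtain ⟨cbar, hcne, hcsol⟩ :=
    finfield_isotropic (AdjoinRoot f) (fun i => AdjoinRoot.mk f (u i))
  choose c hc using fun i => AdjoinRoot.mk_surjective (cbar i)
  obtain ⟨j, hj⟩ := Function.ne_iff.mp hcne
  have hcj : ¬ f ∣ c j := by
    rw [← AdjoinRoot.mk_eq_zero, hc j]
    simpa using hj
  set S : Polynomial Fq := ∑ i, u i * c i ^ 2 with hS
  have hfS : f ∣ S := by
    rw [← AdjoinRoot.mk_eq_zero, hS, map_sum]
    simpa [map_mul, map_pow, hc] using hcsol
  -- L-side quantities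
  set U : Fin 3 → L := fun i => φ (u i) with hUdef
  set C : Fin 3 → L := fun i => φ (c i) with hCdef
  have hUv : ∀ i, Valued.v (U i) = 1 := fun i => hunit _ (hufree i)
  have hUne : ∀ i, U i ≠ 0 := by
    intro i h
    have := hUv i
    rw [h, map_zero] at this
    exact zero_ne_one this
  have hCjv : Valued.v (C j) = 1 := hunit _ hcj
  have hSv : Valued.v (φ S) < 1 := by
    rw [hval]
    change v.intValuation S < 1
    rw [HeightOneSpectrum.intValuation_lt_one_iff_dvd, hv,
      span_singleton_dvd_span_singleton_iff_dvd]
    exact hfS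
  -- 2 is a unit
  have h2L : Valued.v (2 : L) = 1 := by
    have h2Fq : (2 : Fq) ≠ 0 := by
      intro hh
      set p := ringChar Fq with hp
      haveI : CharP Fq p := ringChar.charP Fq
      have hprime : p.Prime := CharP.char_is_prime Fq p
      have hdvd2 : p ∣ 2 := by
        have h2' : ((2 : ℕ) : Fq) = 0 := by exact_mod_cast hh
        exact (CharP.cast_eq_zero_iff Fq p 2).mp h2'
      have hp2 : p = 2 := (Nat.prime_dvd_prime_iff_eq hprime Nat.prime_two).mp hdvd2
      obtain ⟨n, hpn, hcard⟩ := FiniteField.card Fq p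
      rw [hcard, hp2] at hq
      have heven : Even (2 ^ (n : ℕ)) :=
        (Nat.even_pow).mpr ⟨even_two, Nat.pos_iff_ne_zero.mp n.pos⟩
      exact (Nat.not_even_iff_odd.mpr hq) heven
    have h2dvd : ¬ f ∣ (2 : Polynomial Fq) := by
      intro hdvd
      have hunit2 : IsUnit (2 : Polynomial Fq) := by
        rw [show (2 : Polynomial Fq) = Polynomial.C (2 : Fq) by
          rw [map_ofNat]]
        exact Polynomial.isUnit_C.mpr (isUnit_iff_ne_zero.mpr h2Fq)
      exact hirr.not_isUnit (isUnit_of_dvd_unit hdvd hunit2)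
    have h2eq : (2 : L) = φ (2 : Polynomial Fq) := by rw [map_ofNat]
    rw [h2eq]
    exact hunit _ h2dvd
  -- square root
  have hCjne : C j ≠ 0 := by
    intro h
    rw [h, map_zero] at hCjv
    exact zero_ne_one hCjv
  set z : L := C j ^ 2 - φ S / U j with hz
  have hzv : Valued.v (z - C j ^ 2) < 1 := by
    rw [hz, show C j ^ 2 - φ S / U j - C j ^ 2 = -(φ S / U j) by ring,
      Valuation.map_neg, map_div₀, hUv j, div_one]
    exact hSv
  obtain ⟨w, hw⟩ := exists_sqrt h2L hCjv hzv
  have hzne : z ≠ 0 := by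
    intro h
    rw [h, zero_sub, Valuation.map_neg, map_pow, hCjv, one_pow] at hzv
    exact lt_irrefl _ hzv
  have hwne : w ≠ 0 := by
    intro h
    rw [h] at hw
    exact hzne (by simpa using hw.symm)
  -- the modified vector
  set y : Fin 3 → L := Function.update (fun i => C i) j w with hy
  have hyj : y j = w := by rw [hy]; simp
  have hyne : ∀ i, i ≠ j → y i = C i := by
    intro i hij
    rw [hy, Function.update_of_ne hij]
  have hφS : φ S = ∑ i, U i * C i ^ 2 := by
    rw [hS, map_sum]
    simp [hUdef, hCdef, map_mul, map_pow]
  have hsum : ∑ i, U i * y i ^ 2 = 0 := by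
    have hstep : ∑ i, (U i * y i ^ 2 - U i * C i ^ 2) = U j * w ^ 2 - U j * C j ^ 2 := by
      rw [Finset.sum_eq_single j]
      · rw [hyj]
      · intro i _ hij
        rw [hyne i hij]; ring
      · intro h; exact absurd (Finset.mem_univ j) h
    calc ∑ i, U i * y i ^ 2
        = (∑ i, (U i * y i ^ 2 - U i * C i ^ 2)) + ∑ i, U i * C i ^ 2 := by
          rw [Finset.sum_sub_distrib]; ring
      _ = (U j * w ^ 2 - U j * C j ^ 2) + φ S := by rw [hstep, hφS]
      _ = (U j * z - U j * C j ^ 2) + φ S := by rw [hw]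
      _ = 0 := by
          have hcanc : U j * (φ S / U j) = φ S := by
            rw [mul_comm, div_mul_cancel₀ _ (hUne j)]
          rw [hz, mul_sub, hcanc]
          ring
  -- final solution
  set x : Fin 3 → L := fun i => (φ f)⁻¹ ^ (m i / 2) * y i with hx
  have hterm : ∀ i, φ (a i) * x i ^ 2 = φ f ^ (m 0 % 2) * (U i * y i ^ 2) := by
    intro i
    have hmi : m i = 2 * (m i / 2) + m 0 % 2 := by
      conv_lhs => rw [← Nat.div_add_mod (m i) 2]
      rw [hpar i 0]
    have hkey : (φ f) ^ (m i) * ((φ f) ^ (2 * (m i / 2)))⁻¹ = (φ f) ^ (m 0 % 2) := by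
      rw [← pow_sub₀ (φ f) hφf0 (show 2 * (m i / 2) ≤ m i by omega)]
      congr 1
      omega
    calc φ (a i) * x i ^ 2
        = (φ f ^ m i * ((φ f) ^ (2 * (m i / 2)))⁻¹) * (U i * y i ^ 2) := by
          rw [hx, hu i, map_mul, map_pow]
          rw [mul_pow, ← inv_pow, ← pow_mul]
          rw [hUdef]
          ring
      _ = φ f ^ (m 0 % 2) * (U i * y i ^ 2) := by rw [hkey]
  refine ⟨x, ?_, ?_⟩
  · intro h
    have hxj : x j = 0 := congrFun h j
    have hxj' : (φ f)⁻¹ ^ (m j / 2) * y j = 0 := hxj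
    rw [hyj] at hxj'
    exact (mul_ne_zero (pow_ne_zero _ (inv_ne_zero hφf0)) hwne) hxj'
  · calc ∑ i, φ (a i) * x i ^ 2
        = ∑ i, φ f ^ (m 0 % 2) * (U i * y i ^ 2) := Finset.sum_congr rfl fun i _ => hterm i
      _ = φ f ^ (m 0 % 2) * ∑ i, U i * y i ^ 2 := by rw [Finset.mul_sum]
      _ = 0 := by rw [hsum, mul_zero]
end

section
/- Let q be an odd prime power, f a monic irreducible polynomial in 𝔽_q[t], and a₁,a₂,a₃ nonzero polynomials such that v_f(a_i) ≡ v_f(a_j) (mod 2) for some i ≠ j but not all three multiplicities v_f(a₁), v_f(a₂), v_f(a₃) have the same parity. Then a₁x₁² + a₂x₂² + a₃x₃² = 0 has a nontrivial solution in the f-adic completion 𝔽_q(t)_(f) if and only if −f^{−v_f(a_i a_j)} a_i a_j is a square modulo f. -/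
set_option synthInstance.maxHeartbeats 1000000
set_option maxHeartbeats 1000000


open IsDedekindDomain Polynomial

open Multiplicative Filter

local notation "ℤₘ₀" => WithZero (Multiplicative ℤ)

section Helpers

lemma zm0_exists_int {γ : ℤₘ₀} (h : γ ≠ 0) : ∃ n : ℤ, γ = ((ofAdd n : Multiplicative ℤ) : ℤₘ₀) := by
  obtain ⟨a, ha⟩ := WithZero.ne_zero_iff_exists.mp h
  exact ⟨toAdd a, by rw [← ha, ofAdd_toAdd]⟩

lemma zm0_coe_lt_coe {a b : ℤ} :
    (((ofAdd a : Multiplicative ℤ) : ℤₘ₀) < ((ofAdd b : Multiplicative ℤ) : ℤₘ₀)) ↔ a < b := by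
  rw [WithZero.coe_lt_coe, Multiplicative.ofAdd_lt]

lemma zm0_coe_inj {a b : ℤ} :
    (((ofAdd a : Multiplicative ℤ) : ℤₘ₀) = ((ofAdd b : Multiplicative ℤ) : ℤₘ₀)) ↔ a = b := by
  rw [WithZero.coe_inj]
  exact ⟨fun h => by simpa using congrArg toAdd h, fun h => by rw [h]⟩

lemma zm0_coe_mul {a b : ℤ} :
    ((ofAdd a : Multiplicative ℤ) : ℤₘ₀) * ((ofAdd b : Multiplicative ℤ) : ℤₘ₀)
      = ((ofAdd (a+b) : Multiplicative ℤ) : ℤₘ₀) := by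
  rw [← WithZero.coe_mul, ← ofAdd_add]

lemma zm0_one : (1 : ℤₘ₀) = ((ofAdd (0:ℤ) : Multiplicative ℤ) : ℤₘ₀) := rfl

lemma zm0_sq_eq_one {γ : ℤₘ₀} (h : γ * γ = 1) : γ = 1 := by
  have h0 : γ ≠ 0 := by rintro rfl; simp at h
  obtain ⟨n, rfl⟩ := zm0_exists_int h0
  rw [zm0_coe_mul, zm0_one, zm0_coe_inj] at h
  rw [zm0_one, zm0_coe_inj]
  omega

lemma zm0_le_pow_antitone {γ : ℤₘ₀} (h : γ ≤ 1) {m n : ℕ} (hmn : m ≤ n) : γ ^ n ≤ γ ^ m := by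
  obtain ⟨k, rfl⟩ : ∃ k, n = m + k := ⟨n - m, by omega⟩
  rw [pow_add]
  calc γ ^ m * γ ^ k ≤ γ ^ m * 1 := mul_le_mul_right (pow_le_one' h k) _
    _ = γ ^ m := mul_one _

lemma zm0_pow_tendsto {γ : ℤₘ₀} (h : γ < 1) (δ : ℤₘ₀ˣ) : ∃ N : ℕ, ∀ n ≥ N, γ ^ (n+1) < (δ : ℤₘ₀) := by
  rcases eq_or_ne γ 0 with rfl | h0
  · exact ⟨0, fun n _ => by
      rw [zero_pow (Nat.succ_ne_zero n)]
      exact zero_lt_iff.mpr δ.ne_zero⟩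
  · obtain ⟨g, rfl⟩ := zm0_exists_int h0
    have hδ0 : (δ : ℤₘ₀) ≠ 0 := δ.ne_zero
    obtain ⟨d, hd⟩ := zm0_exists_int hδ0
    have hg : g < 0 := by rw [zm0_one, zm0_coe_lt_coe] at h; omega
    refine ⟨d.natAbs, fun n hn => ?_⟩
    rw [hd, ← WithZero.coe_pow, WithZero.coe_lt_coe, ← ofAdd_nsmul, Multiplicative.ofAdd_lt]
    have h1 : (d.natAbs : ℤ) ≤ (n : ℤ) := by exact_mod_cast hn
    have h2 : -d ≤ ((-d).natAbs : ℤ) := Int.le_natAbs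
    rw [Int.natAbs_neg] at h2
    have h4 : (0:ℤ) < (n:ℤ)+1 := by positivity
    have : ((n+1) : ℤ) * g < d := by nlinarith
    simpa [nsmul_eq_mul] using this

lemma zm0_div_lt_one {α β : ℤₘ₀} (hβ : β ≠ 0) : α / β < 1 ↔ α < β := by
  rcases eq_or_ne α 0 with rfl | hα
  · simp [zero_lt_iff, hβ]
  · obtain ⟨x, rfl⟩ := zm0_exists_int hα
    obtain ⟨y, rfl⟩ := zm0_exists_int hβ
    rw [← WithZero.coe_div, zm0_one, WithZero.coe_lt_coe, WithZero.coe_lt_coe,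
      div_eq_mul_inv, ← ofAdd_neg, ← ofAdd_add, Multiplicative.ofAdd_lt, Multiplicative.ofAdd_lt]
    omega

open Valued in
theorem valued_sqrt {L : Type} [Field L] [vL : Valued L ℤₘ₀] [CompleteSpace L]
    (h2 : Valued.v (2 : L) = 1) {u x₀ : L} (hx : Valued.v x₀ = 1)
    (hclose : Valued.v (x₀^2 - u) < 1) : ∃ c : L, c^2 = u := by
  set γ : ℤₘ₀ := Valued.v (x₀^2 - u) with hγdef
  have hγ : γ < 1 := hclose
  have hγ1 : γ ≤ 1 := le_of_lt hγ
  have h20 : (2 : L) ≠ 0 := fun h => by rw [h] at h2; simp at h2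
  let c : ℕ → L := fun n => Nat.recOn n x₀ fun _ b => (b + u / b)/2
  have hc0 : c 0 = x₀ := rfl
  have hcs : ∀ n, c (n+1) = (c n + u / c n)/2 := fun n => rfl
  have key : ∀ n, Valued.v (c n) = 1 ∧ Valued.v (c n ^ 2 - u) ≤ γ^(n+1) := by
    intro n
    induction n with
    | zero => exact ⟨hx, by rw [hc0, pow_one]⟩
    | succ n ih =>
      obtain ⟨h1, hb⟩ := ih
      have hcn0 : c n ≠ 0 := by
        intro h
        rw [h] at h1; simp at h1
      have hγn1 : γ ^ (n+1) < 1 := lt_of_le_of_lt (zm0_le_pow_antitone hγ1 (Nat.one_le_iff_ne_zero.mpr (Nat.succ_ne_zero n))) (by rwa [pow_one])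
      have e1 : c (n+1) - c n = (u - c n^2)/(2 * c n) := by
        rw [hcs]; field_simp; ring
      have e2 : c (n+1)^2 - u = ((c n^2 - u)/(2 * c n))^2 := by
        rw [hcs]; field_simp; ring
      have hv1 : Valued.v (c (n+1) - c n) ≤ γ^(n+1) := by
        rw [e1, map_div₀, Valuation.map_mul, h2, h1, mul_one, div_one, ← neg_sub, Valuation.map_neg]
        exact hb
      have hvc : Valued.v (c (n+1)) = 1 := by
        have hlt : Valued.v (c (n+1) - c n) < Valued.v (c n) := by
          rw [h1]; exact lt_of_le_of_lt hv1 hγn1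
        have := Valuation.map_add_eq_of_lt_right Valued.v hlt
        rwa [sub_add_cancel, h1] at this
      refine ⟨hvc, ?_⟩
      rw [e2, Valuation.map_pow, map_div₀, Valuation.map_mul, h2, h1, mul_one, div_one]
      calc Valued.v (c n ^ 2 - u) ^ 2 ≤ (γ^(n+1))^2 := pow_le_pow_left' hb 2
        _ = γ^(2*(n+1)) := by rw [← pow_mul, mul_comm]
        _ ≤ γ^(n+1+1) := zm0_le_pow_antitone hγ1 (by omega)
  have hdiff : ∀ n, Valued.v (c (n+1) - c n) ≤ γ^(n+1) := by
    intro n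
    obtain ⟨h1, hb⟩ := key n
    have hcn0 : c n ≠ 0 := fun h => by rw [h] at h1; simp at h1
    have e1 : c (n+1) - c n = (u - c n^2)/(2 * c n) := by rw [hcs]; field_simp; ring
    rw [e1, map_div₀, Valuation.map_mul, h2, h1, mul_one, div_one, ← neg_sub, Valuation.map_neg]
    exact hb
  have hgap : ∀ m n, m ≤ n → Valued.v (c n - c m) ≤ γ^(m+1) := by
    intro m n hmn
    induction n with
    | zero =>
      have : m = 0 := Nat.le_zero.mp hmn
      subst this; simp
    | succ n ih =>
      rcases Nat.lt_or_ge m (n+1) with h | h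
      · have hmn' : m ≤ n := by omega
        have e : c (n+1) - c m = (c (n+1) - c n) + (c n - c m) := by ring
        rw [e]
        refine le_trans (Valued.v.map_add _ _) (max_le ?_ (ih hmn'))
        exact le_trans (hdiff n) (zm0_le_pow_antitone hγ1 (by omega))
      · have : m = n+1 := by omega
        subst this; simp
  have hcauchy : CauchySeq c := by
    rw [(Valued.hasBasis_uniformity L ℤₘ₀).cauchySeq_iff]
    intro δ _
    have hδ0 : MonoidWithZeroHom.ValueGroup₀.embedding δ.1 ≠ 0 := fun h =>
      δ.ne_zero (MonoidWithZeroHom.ValueGroup₀.embedding_injective (h.trans (map_zero _).symm))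
    obtain ⟨N, hN⟩ := zm0_pow_tendsto hγ (Units.mk0 _ hδ0)
    refine ⟨N, fun p hp q hq => ?_⟩
    simp only [Set.mem_setOf_eq, Valuation.restrict_lt_iff_lt_embedding]
    rcases le_total p q with h | h
    · exact lt_of_le_of_lt (hgap p q h) (hN p hp)
    · rw [Valuation.map_sub_swap]
      exact lt_of_le_of_lt (hgap q p h) (hN q hq)
  obtain ⟨l, hl⟩ := cauchySeq_tendsto_of_complete hcauchy
  refine ⟨l, ?_⟩
  have ht1 : Tendsto (fun n => c n ^ 2 - u) atTop (nhds (l^2 - u)) :=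
    (hl.pow 2).sub tendsto_const_nhds
  have ht2 : Tendsto (fun n => c n ^ 2 - u) atTop (nhds 0) := by
    rw [(Valued.hasBasis_nhds_zero L ℤₘ₀).tendsto_right_iff]
    intro δ _
    have hδ0 : MonoidWithZeroHom.ValueGroup₀.embedding δ.1 ≠ 0 := fun h =>
      δ.ne_zero (MonoidWithZeroHom.ValueGroup₀.embedding_injective (h.trans (map_zero _).symm))
    obtain ⟨N, hN⟩ := zm0_pow_tendsto hγ (Units.mk0 _ hδ0)
    filter_upwards [eventually_ge_atTop N] with n hn
    rw [Valuation.restrict_lt_iff_lt_embedding]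
    exact lt_of_le_of_lt (key n).2 (hN n hn)
  exact sub_eq_zero.mp (tendsto_nhds_unique ht1 ht2)

theorem valuation_three_sum {L : Type} [Field L] [vL : Valued L ℤₘ₀] {t1 t2 t3 : L}
    (h : t1 + t2 + t3 = 0) :
    (Valued.v t1 = Valued.v t2 ∧ Valued.v t3 ≤ Valued.v t1) ∨
    (Valued.v t1 = Valued.v t3 ∧ Valued.v t2 ≤ Valued.v t1) ∨
    (Valued.v t2 = Valued.v t3 ∧ Valued.v t1 ≤ Valued.v t2) := by
  have h3 : t3 = -(t1 + t2) := by linear_combination h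
  rcases lt_trichotomy (Valued.v t1) (Valued.v t2) with hlt | heq | hgt
  · right; right
    constructor
    · rw [h3, Valuation.map_neg, Valuation.map_add_eq_of_lt_right _ hlt]
    · exact le_of_lt hlt
  · left
    refine ⟨heq, ?_⟩
    rw [h3, Valuation.map_neg]
    calc Valued.v (t1+t2) ≤ max (Valued.v t1) (Valued.v t2) := Valued.v.map_add _ _
      _ = Valued.v t1 := by rw [← heq, max_self]
  · right; left
    constructor
    · rw [h3, Valuation.map_neg, Valuation.map_add_eq_of_lt_left _ hgt]
    · exact le_of_lt hgt

end Helpers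
section AdicHelpers

open IsDedekindDomain.HeightOneSpectrum

variable {Fq : Type} [Field Fq]

lemma span_dvd_iff (v : HeightOneSpectrum (Polynomial Fq)) {f : Polynomial Fq}
    (hv : v.asIdeal = Ideal.span {f}) (r : Polynomial Fq) :
    v.asIdeal ∣ Ideal.span {r} ↔ f ∣ r := by
  rw [hv, Ideal.dvd_iff_le, Ideal.span_singleton_le_span_singleton]

lemma int_val_unit (v : HeightOneSpectrum (Polynomial Fq)) {f r : Polynomial Fq}
    (hv : v.asIdeal = Ideal.span {f}) (hr : ¬ f ∣ r) : v.intValuation r = 1 := by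
  refine le_antisymm (v.intValuation_le_one r) ?_
  by_contra hlt
  rw [not_le] at hlt
  exact hr ((span_dvd_iff v hv r).mp ((v.intValuation_lt_one_iff_dvd r).mp hlt))

lemma int_val_pow_mul (v : HeightOneSpectrum (Polynomial Fq)) {f c : Polynomial Fq}
    (hv : v.asIdeal = Ideal.span {f}) (hf0 : f ≠ 0) (m : ℕ) (hc : ¬ f ∣ c) :
    v.intValuation (f ^ m * c) = ((Multiplicative.ofAdd (-(m:ℤ)) : Multiplicative ℤ) : ℤₘ₀) := by
  rw [map_mul, map_pow, intValuation_singleton v hf0 hv, int_val_unit v hv hc, mul_one,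
    ← WithZero.exp_nsmul]
  change WithZero.exp _ = WithZero.exp (-(m:ℤ))
  congr 1
  simp [nsmul_eq_mul]

lemma fin3_cover (i j : Fin 3) (hij : i ≠ j) :
    -(i+j) ≠ i ∧ -(i+j) ≠ j ∧ ∀ k : Fin 3, k = i ∨ k = j ∨ k = -(i+j) := by
  revert hij; revert i j; decide

lemma fin3_sum {M : Type} [AddCommMonoid M] (g : Fin 3 → M) (i j : Fin 3) (hij : i ≠ j) :
    ∑ k, g k = g i + g j + g (-(i+j)) := by
  have huniv : (Finset.univ : Finset (Fin 3)) = {i, j, -(i+j)} := by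
    revert hij; revert i j; decide
  obtain ⟨h1, h2, _⟩ := fin3_cover i j hij
  rw [huniv, Finset.sum_insert (by
      intro hmem
      simp only [Finset.mem_insert, Finset.mem_singleton] at hmem
      rcases hmem with h | h
      · exact hij h
      · exact h1 h.symm),
    Finset.sum_insert (by
      intro hmem
      rw [Finset.mem_singleton] at hmem
      exact h2 hmem.symm),
    Finset.sum_singleton, add_assoc]

end AdicHelpers
set_option maxHeartbeats 16000000 in
set_option synthInstance.maxHeartbeats 2000000 in
open IsDedekindDomain.HeightOneSpectrum in
/-- Mixed-parity local solvability criterion at a finite place `f`: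
if `v_f(a_i) ≡ v_f(a_j) (mod 2)` for some `i ≠ j` but not all three multiplicities have the
same parity, then `a₁x₁² + a₂x₂² + a₃x₃² = 0` is nontrivially solvable in the `f`-adic
completion iff `−f^{−v_f(a_i a_j)} a_i a_j` is a square modulo `f`. -/
theorem stmt1 (Fq : Type) [Field Fq] [Fintype Fq] (hq : Odd (Fintype.card Fq))
    (f : Polynomial Fq) (hf : f.Monic) (hirr : Irreducible f)
    (a : Fin 3 → Polynomial Fq) (ha : ∀ k, a k ≠ 0)
    (m : Fin 3 → ℕ) (hm : ∀ k, f ^ (m k) ∣ a k ∧ ¬ f ^ (m k + 1) ∣ a k)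
    (i j : Fin 3) (hij : i ≠ j) (hpar : m i % 2 = m j % 2)
    (hnotall : ¬ ∀ k l, m k % 2 = m l % 2)
    (b : Polynomial Fq) (hb : a i * a j = f ^ (m i + m j) * b)
    (v : HeightOneSpectrum (Polynomial Fq)) (hv : v.asIdeal = Ideal.span {f}) :
    (∃ x : Fin 3 → v.adicCompletion (RatFunc Fq), x ≠ 0 ∧
        ∑ k, algebraMap (Polynomial Fq) (v.adicCompletion (RatFunc Fq)) (a k) * x k ^ 2 = 0)
      ↔ IsSquare (Ideal.Quotient.mk (Ideal.span {f}) (-b)) := by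
  classical
  set L := v.adicCompletion (RatFunc Fq) with hLdef
  set A := algebraMap (Polynomial Fq) L with hAdef
  -- basic facts about f
  have hf0 : f ≠ 0 := hirr.ne_zero
  have hfprime : Prime f := UniqueFactorizationMonoid.irreducible_iff_prime.mp hirr
  -- decompose the aₖ
  have hdec : ∀ k, ∃ c, a k = f ^ m k * c ∧ ¬ f ∣ c := by
    intro k
    obtain ⟨c, hc⟩ := (hm k).1
    refine ⟨c, hc, fun hd => (hm k).2 ?_⟩
    obtain ⟨d, rfl⟩ := hd
    exact ⟨d, by rw [hc]; ring⟩
  choose c hc1 hc2 using hdec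
  have hbprod : b = c i * c j := by
    have h1 : f ^ (m i + m j) * (c i * c j) = f ^ (m i + m j) * b := by
      rw [← hb, hc1 i, hc1 j]; ring
    exact (mul_left_cancel₀ (pow_ne_zero _ hf0) h1).symm
  have hfb : ¬ f ∣ b := by
    rw [hbprod]
    intro hd
    rcases hfprime.2.2 _ _ hd with h | h
    · exact hc2 i h
    · exact hc2 j h
  -- valuations of images in L
  have hvalA : ∀ r : Polynomial Fq, Valued.v (A r) = v.intValuation r := by
    intro r
    rw [hAdef, IsDedekindDomain.HeightOneSpectrum.valuedAdicCompletion_eq_valuation,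
      IsDedekindDomain.HeightOneSpectrum.valuation_of_algebraMap]
  have hA : ∀ k, Valued.v (A (a k)) =
      ((Multiplicative.ofAdd (-(m k : ℤ)) : Multiplicative ℤ) : ℤₘ₀) := by
    intro k
    rw [hvalA, hc1 k, int_val_pow_mul v hv hf0 _ (hc2 k)]
  have hAne : ∀ k, A (a k) ≠ 0 := by
    intro k
    have := hA k
    intro h0
    rw [h0, map_zero] at this
    exact WithZero.zero_ne_coe this
  have hAb : Valued.v (A b) = 1 := by rw [hvalA, int_val_unit v hv hfb]
  have hAbne : A b ≠ 0 := by
    intro h0; rw [h0, map_zero] at hAb; exact zero_ne_one hAb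
  have hAf : Valued.v (A f) = ((Multiplicative.ofAdd (-1 : ℤ) : Multiplicative ℤ) : ℤₘ₀) := by
    rw [hvalA, intValuation_singleton v hf0 hv]; rfl
  have hAfne : A f ≠ 0 := by
    intro h0; rw [h0, map_zero] at hAf; exact WithZero.zero_ne_coe hAf
  -- 2 is a unit
  have htwo : (2 : Fq) ≠ 0 := by
    intro h2
    have hchar : ringChar Fq ∣ 2 := (ringChar.spec Fq 2).mp (by exact_mod_cast h2)
    have hne1 : ringChar Fq ≠ 1 := CharP.ringChar_ne_one
    have h2' : ringChar Fq = 2 := by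
      rcases (Nat.dvd_prime Nat.prime_two).mp hchar with h | h
      · exact absurd h hne1
      · exact h
    have := FiniteField.even_card_iff_char_two.mp h2'
    rw [Nat.odd_iff] at hq
    omega
  have hf2 : ¬ f ∣ (2 : Polynomial Fq) := by
    intro hd
    have hC : Polynomial.C (2 : Fq) = (2 : Polynomial Fq) := map_ofNat Polynomial.C 2
    have hu : IsUnit (2 : Polynomial Fq) := by
      rw [← hC]
      exact Polynomial.isUnit_C.mpr (isUnit_iff_ne_zero.mpr htwo)
    exact hirr.not_isUnit (isUnit_of_dvd_unit hd hu)
  have h2L : Valued.v (2 : L) = 1 := by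
    have : (2 : L) = A (2 : Polynomial Fq) := (map_ofNat A 2).symm
    rw [this, hvalA, int_val_unit v hv hf2]
  -- parity bookkeeping
  obtain ⟨hk0i, hk0j, hcover⟩ := fin3_cover i j hij
  have hpark : m (-(i+j)) % 2 ≠ m i % 2 := by
    intro h
    apply hnotall
    have hvals : ∀ k, m k % 2 = m i % 2 := by
      intro k
      rcases hcover k with rfl | rfl | rfl
      · rfl
      · exact hpar.symm
      · exact h
    intro k l
    rw [hvals k, hvals l]
  obtain ⟨s, hs⟩ : ∃ s, m i + m j = 2 * s := ⟨(m i + m j)/2, by omega⟩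
  constructor
  · rintro ⟨x, hx0, hsum⟩
    set t : Fin 3 → L := fun k => A (a k) * x k ^ 2 with htdef
    have htzero : ∀ k, t k = 0 ↔ x k = 0 := by
      intro k
      rw [htdef]
      constructor
      · intro h
        rcases mul_eq_zero.mp h with h | h
        · exact absurd h (hAne k)
        · exact pow_eq_zero_iff two_ne_zero |>.mp h
      · intro h
        show A (a k) * x k ^ 2 = 0
        rw [h]
        ring
    have ht : t i + t j + t (-(i+j)) = 0 := by
      rw [← fin3_sum t i j hij]
      exact hsum
    have hallzero : t i = 0 → t j = 0 → t (-(i+j)) = 0 → False := by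
      intro h1 h2 h3
      apply hx0
      funext k
      show x k = 0
      rcases hcover k with h | h | h
      · rw [h]; exact (htzero i).mp h1
      · rw [h]; exact (htzero j).mp h2
      · rw [h]; exact (htzero _).mp h3
    have htval : ∀ k, x k ≠ 0 → ∃ n : ℤ, Valued.v (t k) =
        ((Multiplicative.ofAdd (2*n - (m k : ℤ)) : Multiplicative ℤ) : ℤₘ₀) := by
      intro k hk
      obtain ⟨n, hn⟩ := zm0_exists_int ((Valued.v).ne_zero_iff.mpr hk)
      refine ⟨n, ?_⟩
      have : Valued.v (t k) = Valued.v (A (a k)) * Valued.v (x k) ^ 2 := by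
        rw [htdef]
        show Valued.v (A (a k) * x k ^ 2) = _
        rw [Valuation.map_mul, Valuation.map_pow]
      rw [this, hA k, hn, sq, zm0_coe_mul, zm0_coe_mul, zm0_coe_inj]
      ring
    have hexcl : ∀ k, (k = i ∨ k = j) →
        Valued.v (t k) = Valued.v (t (-(i+j))) → t k = 0 ∧ t (-(i+j)) = 0 := by
      intro k hk heq
      by_cases h1 : t k = 0
      · refine ⟨h1, ?_⟩
        rw [h1, Valuation.map_zero] at heq
        exact (Valuation.zero_iff _).mp heq.symm
      · exfalso
        have hxk : x k ≠ 0 := fun h => h1 ((htzero k).mpr h)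
        have hxk0 : x (-(i+j)) ≠ 0 := by
          intro h
          have h2 : t (-(i+j)) = 0 := (htzero _).mpr h
          rw [h2, Valuation.map_zero] at heq
          exact h1 ((Valuation.zero_iff _).mp heq)
        obtain ⟨n1, hn1⟩ := htval k hxk
        obtain ⟨n2, hn2⟩ := htval _ hxk0
        rw [hn1, hn2, zm0_coe_inj] at heq
        have hmk : m k % 2 = m i % 2 := by
          rcases hk with rfl | rfl
          · rfl
          · exact hpar.symm
        omega
    rcases valuation_three_sum ht with ⟨heq, hle⟩ | ⟨heq, hle⟩ | ⟨heq, hle⟩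
    rotate_left
    · -- v t i = v t k0, v t j ≤ v t i : contradiction
      exfalso
      obtain ⟨h1, h3⟩ := hexcl i (Or.inl rfl) heq
      rw [h1, Valuation.map_zero, le_zero_iff] at hle
      exact hallzero h1 ((Valuation.zero_iff _).mp hle) h3
    · -- v t j = v t k0, v t i ≤ v t j : contradiction
      exfalso
      obtain ⟨h2, h3⟩ := hexcl j (Or.inr rfl) heq
      rw [h2, Valuation.map_zero, le_zero_iff] at hle
      exact hallzero ((Valuation.zero_iff _).mp hle) h2 h3
    -- main case : v t i = v t j, v t k0 ≤ v t i
    have hti0 : t i ≠ 0 := by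
      intro h1
      have hvj : Valued.v (t j) = 0 := by rw [← heq, h1, Valuation.map_zero]
      rw [h1, Valuation.map_zero, le_zero_iff] at hle
      exact hallzero h1 ((Valuation.zero_iff _).mp hvj) ((Valuation.zero_iff _).mp hle)
    have htj0 : t j ≠ 0 := by
      intro h2
      rw [h2, Valuation.map_zero] at heq
      exact hti0 ((Valuation.zero_iff _).mp heq)
    have hltk : Valued.v (t (-(i+j))) < Valued.v (t j) := by
      rw [← heq]
      refine lt_of_le_of_ne hle ?_
      intro h
      exact hti0 (hexcl i (Or.inl rfl) h.symm).1
    have hxj0 : x j ≠ 0 := fun h => htj0 ((htzero j).mpr h)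
    have hxjL0 : Valued.v (x j) ≠ 0 := (Valued.v).ne_zero_iff.mpr hxj0
    have htjv0 : Valued.v (t j) ≠ 0 := (Valued.v).ne_zero_iff.mpr htj0
    set z : L := (A f)^s * x i / (A (a j) * x j) with hzdef
    have hAA : A (a i) * A (a j) = ((A f)^s)^2 * A b := by
      rw [← map_mul, hb, map_mul, map_pow, hs, pow_mul']
    have hAaj0 : A (a j) ≠ 0 := hAne j
    have hw : t i / t j = A b * z ^ 2 := by
      rw [htdef, hzdef]
      show A (a i) * x i ^ 2 / (A (a j) * x j ^ 2)
          = A b * ((A f)^s * x i / (A (a j) * x j)) ^ 2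
      linear_combination (x i ^ 2 * (A (a j))⁻¹ ^ 2 * (x j)⁻¹ ^ 2) * hAA
        - (A (a i) * x i ^ 2 * (x j)⁻¹ ^ 2 * (A (a j))⁻¹) * mul_inv_cancel₀ hAaj0
    have hvw1 : Valued.v (t i / t j) = 1 := by
      rw [map_div₀, heq, div_self htjv0]
    have hvz : Valued.v z = 1 := by
      have h1 : Valued.v (A b * z ^ 2) = 1 := by rw [← hw]; exact hvw1
      rw [Valuation.map_mul, hAb, one_mul, Valuation.map_pow, sq] at h1
      exact zm0_sq_eq_one h1
    have hwm : Valued.v (t i / t j + 1) < 1 := by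
      have hrw : t (-(i+j)) = -(t i + t j) := by linear_combination ht
      have he : t i / t j + 1 = -(t (-(i+j))) / t j := by
        rw [hrw, neg_neg, add_div, div_self htj0]
      rw [he, map_div₀, Valuation.map_neg]
      exact (zm0_div_lt_one htjv0).mpr hltk
    have hBz : Valued.v (A b * z^2 + 1) < 1 := by rw [← hw]; exact hwm
    -- density: approximate z by an element of RatFunc Fq
    have hznhds : {y : L | Valued.v (y - z) < ((1:ℤₘ₀ˣ) : ℤₘ₀)} ∈ nhds z := by
      rw [Valued.mem_nhds]
      exact ⟨1, fun y hy => by simpa using hy⟩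
    have hdense : DenseRange (algebraMap (RatFunc Fq) L) :=
      IsDedekindDomain.HeightOneSpectrum.denseRange_algebraMap (RatFunc Fq) v
    obtain ⟨y, hy1, ⟨k, hk⟩⟩ := mem_closure_iff_nhds.mp (hdense z) _ hznhds
    have hkL : algebraMap (RatFunc Fq) L k = y := hk
    set kL : L := algebraMap (RatFunc Fq) L k with hkLdef
    have hy1'' : Valued.v (y - z) < ((1:ℤₘ₀ˣ) : ℤₘ₀) := hy1
    have hy1' : Valued.v (kL - z) < 1 := by
      rw [hkL]
      rwa [Units.val_one] at hy1''
    have hvkL : Valued.v kL = 1 := by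
      have h1 : Valued.v (kL - z) < Valued.v z := by rwa [hvz]
      have h2 := Valuation.map_add_eq_of_lt_right Valued.v h1
      rwa [sub_add_cancel, hvz] at h2
    have hvkb : Valued.v (A b * kL^2 + 1) < 1 := by
      have hvdiff : Valued.v (A b * kL^2 + 1 - (A b * z^2 + 1)) < 1 := by
        have he : A b * kL^2 + 1 - (A b * z^2 + 1) = A b * ((kL - z) * (kL + z)) := by ring
        rw [he, Valuation.map_mul, hAb, one_mul, Valuation.map_mul]
        have hsum1 : Valued.v (kL + z) ≤ 1 := by
          refine le_trans ((Valued.v).map_add kL z) ?_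
          rw [hvkL, hvz, max_self]
        calc Valued.v (kL - z) * Valued.v (kL + z) ≤ Valued.v (kL - z) * 1 :=
              mul_le_mul_right hsum1 _
          _ = Valued.v (kL - z) := mul_one _
          _ < 1 := hy1'
      have he2 : A b * kL^2 + 1 = (A b * z^2 + 1) + (A b * kL^2 + 1 - (A b * z^2 + 1)) := by ring
      rw [he2]
      exact Valuation.map_add_lt _ hBz hvdiff
    -- transfer to RatFunc
    have hAbK : A b = algebraMap (RatFunc Fq) L (algebraMap (Polynomial Fq) (RatFunc Fq) b) := by
      rw [hAdef, IsScalarTower.algebraMap_apply (Polynomial Fq) (RatFunc Fq) L]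
    have htransfer : ∀ w : RatFunc Fq, Valued.v (algebraMap (RatFunc Fq) L w) = v.valuation (RatFunc Fq) w := by
      intro w
      exact IsDedekindDomain.HeightOneSpectrum.valuedAdicCompletion_eq_valuation' v w
    have hvalk : v.valuation (RatFunc Fq) k = 1 := by
      rw [← htransfer k, ← hkLdef, hvkL]
    have hvalkb : v.valuation (RatFunc Fq) (algebraMap (Polynomial Fq) (RatFunc Fq) b * k^2 + 1) < 1 := by
      have he : algebraMap (RatFunc Fq) L (algebraMap (Polynomial Fq) (RatFunc Fq) b * k^2 + 1)
          = A b * kL^2 + 1 := by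
        rw [map_add, map_mul, map_pow, map_one, hAbK, hkLdef]
      rw [← htransfer, he]
      exact hvkb
    -- RatFunc num/denom analysis
    set N := k.num with hNdef
    set D := k.denom with hDdef
    have hD0 : D ≠ 0 := k.denom_ne_zero
    have hcop : IsCoprime N D := RatFunc.isCoprime_num_denom k
    have hkND : algebraMap (Polynomial Fq) (RatFunc Fq) N
        / algebraMap (Polynomial Fq) (RatFunc Fq) D = k := RatFunc.num_div_denom k
    have hDK0 : algebraMap (Polynomial Fq) (RatFunc Fq) D ≠ 0 := by
      intro h
      exact hD0 ((map_eq_zero_iff _ (IsFractionRing.injective (Polynomial Fq) (RatFunc Fq))).mp h)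
    have hDint : v.intValuation D ≠ 0 := v.intValuation_ne_zero D hD0
    have hvND : v.intValuation N = v.intValuation D := by
      have h1 : v.valuation (RatFunc Fq) k = v.intValuation N / v.intValuation D := by
        rw [← hkND, map_div₀,
          IsDedekindDomain.HeightOneSpectrum.valuation_of_algebraMap,
          IsDedekindDomain.HeightOneSpectrum.valuation_of_algebraMap]
      rw [hvalk] at h1
      have h2 := congrArg (· * v.intValuation D) h1
      simp only [one_mul] at h2
      rw [div_mul_cancel₀ _ hDint] at h2
      exact h2.symm
    have hfD : ¬ f ∣ D := by
      intro hd
      have h1 : v.intValuation D < 1 :=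
        (v.intValuation_lt_one_iff_dvd D).mpr ((span_dvd_iff v hv D).mpr hd)
      have h2 : v.intValuation N < 1 := by rw [hvND]; exact h1
      have h3 : f ∣ N := (span_dvd_iff v hv N).mp ((v.intValuation_lt_one_iff_dvd N).mp h2)
      exact hirr.not_isUnit (hcop.isUnit_of_dvd' h3 hd)
    have hDunit : v.intValuation D = 1 := int_val_unit v hv hfD
    have he2 : algebraMap (Polynomial Fq) (RatFunc Fq) b * k^2 + 1
        = algebraMap (Polynomial Fq) (RatFunc Fq) (b*N^2 + D^2)
          / algebraMap (Polynomial Fq) (RatFunc Fq) (D^2) := by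
      rw [← hkND, map_add, map_mul, map_pow, map_pow]
      field_simp
    have hv2 : v.intValuation (b*N^2 + D^2) < 1 := by
      rw [he2, map_div₀,
        IsDedekindDomain.HeightOneSpectrum.valuation_of_algebraMap,
        IsDedekindDomain.HeightOneSpectrum.valuation_of_algebraMap,
        map_pow, hDunit, one_pow, div_one] at hvalkb
      exact hvalkb
    have hdvd2 : f ∣ b*N^2 + D^2 :=
      (span_dvd_iff v hv _).mp ((v.intValuation_lt_one_iff_dvd _).mp hv2)
    have hfN : ¬ f ∣ N := by
      intro hd
      have h1 : f ∣ b*N^2 := Dvd.dvd.mul_left (hd.trans (dvd_pow_self N two_ne_zero)) b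
      have h2 : f ∣ D^2 := by
        have := hdvd2.sub h1
        simpa using this
      exact hfD (hfprime.dvd_of_dvd_pow h2)
    -- Bezout in the quotient
    have hmax : (Ideal.span ({f} : Set (Polynomial Fq))).IsMaximal :=
      PrincipalIdealRing.isMaximal_of_irreducible hirr
    have hsup : Ideal.span ({f} : Set (Polynomial Fq)) ⊔ Ideal.span {N} = ⊤ := by
      by_contra hne
      have heqI := hmax.eq_of_le hne le_sup_left
      have hNle : Ideal.span ({N} : Set (Polynomial Fq)) ≤ Ideal.span {f} :=
        heqI ▸ le_sup_right
      exact hfN (Ideal.span_singleton_le_span_singleton.mp hNle)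
    have hone : (1 : Polynomial Fq) ∈ Ideal.span ({f} : Set (Polynomial Fq)) ⊔ Ideal.span {N} := by
      rw [hsup]; exact Submodule.mem_top
    obtain ⟨yf, hyf, zN, hzN, hyz⟩ := Submodule.mem_sup.mp hone
    obtain ⟨u, rfl⟩ := Ideal.mem_span_singleton'.mp hyf
    obtain ⟨w, rfl⟩ := Ideal.mem_span_singleton'.mp hzN
    have hQf : Ideal.Quotient.mk (Ideal.span ({f} : Set (Polynomial Fq))) f = 0 := by
      rw [Ideal.Quotient.eq_zero_iff_mem]
      exact Ideal.subset_span rfl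
    have h1 : Ideal.Quotient.mk (Ideal.span {f}) b * (Ideal.Quotient.mk (Ideal.span {f}) N)^2
        + (Ideal.Quotient.mk (Ideal.span {f}) D)^2 = 0 := by
      rw [← map_pow, ← map_pow, ← map_mul, ← map_add, Ideal.Quotient.eq_zero_iff_mem,
        Ideal.mem_span_singleton]
      exact hdvd2
    have h2 : Ideal.Quotient.mk (Ideal.span {f}) w * Ideal.Quotient.mk (Ideal.span {f}) N
        = 1 := by
      have h3 := congrArg (Ideal.Quotient.mk (Ideal.span ({f} : Set (Polynomial Fq)))) hyz
      rw [map_add, map_mul, map_mul, hQf, mul_zero, zero_add, map_one] at h3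
      exact h3
    refine ⟨Ideal.Quotient.mk (Ideal.span {f}) (D*w), ?_⟩
    rw [map_mul, map_neg]
    linear_combination (-((Ideal.Quotient.mk (Ideal.span {f}) w)^2)) * h1
      + (Ideal.Quotient.mk (Ideal.span {f}) b
          * (Ideal.Quotient.mk (Ideal.span {f}) N * Ideal.Quotient.mk (Ideal.span {f}) w + 1)) * h2

  · intro hsq
    obtain ⟨r, hr⟩ := hsq
    obtain ⟨p, rfl⟩ := Ideal.Quotient.mk_surjective r
    have hdvd : f ∣ b + p ^ 2 := by
      rw [← Ideal.mem_span_singleton, ← Ideal.Quotient.eq_zero_iff_mem, map_add, map_pow]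
      have hbmk : (Ideal.Quotient.mk (Ideal.span {f})) b
          = -((Ideal.Quotient.mk (Ideal.span {f})) p * (Ideal.Quotient.mk (Ideal.span {f})) p) := by
        rw [← hr, map_neg, neg_neg]
      rw [hbmk]; ring
    have hfp : ¬ f ∣ p := by
      intro hd
      apply hfb
      have h1 : f ∣ p ^ 2 := hd.trans (dvd_pow_self p two_ne_zero)
      have h2 := hdvd.sub h1
      simpa using h2
    have hx0v : Valued.v (A p) = 1 := by rw [hvalA, int_val_unit v hv hfp]
    have hclose : Valued.v ((A p)^2 - (-(A b))) < 1 := by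
      have he : (A p)^2 - (-(A b)) = A (b + p^2) := by rw [map_add, map_pow]; ring
      rw [he, hvalA]
      exact lt_of_lt_of_le ((v.intValuation_lt_one_iff_dvd _).mpr
        ((span_dvd_iff v hv _).mpr hdvd)) (le_refl _)
    obtain ⟨cc, hcc⟩ := valued_sqrt h2L hx0v hclose
    set x : Fin 3 → L := fun k => if k = i then (A f)^s * cc else if k = j then A (a i) else 0
      with hxdef
    have hxi : x i = (A f)^s * cc := by simp [hxdef]
    have hxj : x j = A (a i) := by simp [hxdef, Ne.symm hij]
    have hxk : x (-(i+j)) = 0 := by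
      rw [hxdef]
      exact (if_neg hk0i).trans (if_neg hk0j)
    refine ⟨x, ?_, ?_⟩
    · intro h0
      have := congrFun h0 j
      rw [hxj] at this
      exact hAne i this
    · rw [fin3_sum (fun k => A (a k) * x k ^ 2) i j hij]
      simp only [hxi, hxj, hxk]
      have hAA : A (a i) * A (a j) = ((A f)^s)^2 * A b := by
        rw [← map_mul, hb, map_mul, map_pow, hs, pow_mul']
      linear_combination (A (a i) * ((A f)^s)^2) * hcc + A (a i) * hAA
end

section
/- Let q be an odd prime power and a₁,a₂,a₃ nonzero polynomials in 𝔽_q[t]. If deg(a₁), deg(a₂), deg(a₃) all have the same parity, then the equation a₁x₁² + a₂x₂² + a₃x₃² = 0 admits a nontrivial solution in the field of formal Laurent series 𝔽_q((1/t)). -/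
set_option synthInstance.maxHeartbeats 1000000
set_option maxHeartbeats 1000000

open Polynomial

section Sqrt

variable {F : Type} [Field F]

/-- Coefficients of the square root of a power series, by recursion. -/
noncomputable def sqc (c : ℕ → F) (b : F) : ℕ → F
  | 0 => b
  | (n+1) => (c (n+1) - ∑ i ∈ (Finset.range n).attach,
      sqc c b (i.1 + 1) * sqc c b (n - i.1)) / (2*b)
  decreasing_by
  · have := i.2; simp only [Finset.mem_range] at this; omega
  · omega

lemma sqc_zero (c : ℕ → F) (b : F) : sqc c b 0 = b := by simp [sqc]

lemma sqc_succ (c : ℕ → F) (b : F) (n : ℕ) :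
    sqc c b (n+1) = (c (n+1) - ∑ i ∈ Finset.range n,
      sqc c b (i + 1) * sqc c b (n - i)) / (2*b) := by
  rw [sqc]
  congr 1
  rw [← Finset.sum_attach (Finset.range n) (fun i => sqc c b (i + 1) * sqc c b (n - i))]

lemma exists_sqrt_s2 (h2 : (2:F) ≠ 0) (f : PowerSeries F) (b : F) (hb : b ≠ 0)
    (hf : PowerSeries.constantCoeff f = b ^ 2) : ∃ g : PowerSeries F, g ^ 2 = f := by
  set c : ℕ → F := fun n => PowerSeries.coeff n f with hc
  refine ⟨PowerSeries.mk (sqc c b), ?_⟩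
  ext n
  rw [pow_two, PowerSeries.coeff_mul]
  rw [Finset.Nat.sum_antidiagonal_eq_sum_range_succ_mk]
  simp only [PowerSeries.coeff_mk]
  cases n with
  | zero =>
      have hc0 : c 0 = b ^ 2 := by
        rw [hc]; simpa using hf
      rw [Finset.sum_range_one]
      norm_num [sqc_zero, hc0]
      rw [hf, pow_two]
  | succ n =>
      rw [Finset.sum_range_succ, Finset.sum_range_succ']
      have he : ∀ i ∈ Finset.range n, sqc c b (i+1) * sqc c b (n + 1 - (i+1))
          = sqc c b (i+1) * sqc c b (n - i) := by
        intro i _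
        congr 2
        omega
      rw [Finset.sum_congr rfl he]
      set S := ∑ i ∈ Finset.range n, sqc c b (i + 1) * sqc c b (n - i) with hS
      simp only [Nat.sub_zero, Nat.sub_self, sqc_zero]
      rw [sqc_succ c b n, ← hS]
      have h2b : (2:F) * b ≠ 0 := mul_ne_zero h2 hb
      field_simp
      ring

lemma solve2 (h2 : (2:F) ≠ 0) (u v : PowerSeries F) (l : F) (hl : l ≠ 0)
    (hu : PowerSeries.constantCoeff u ≠ 0)
    (hc : PowerSeries.constantCoeff u * l ^ 2 + PowerSeries.constantCoeff v = 0) :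
    ∃ g : PowerSeries F, u * g ^ 2 + v = 0 := by
  have hcc : PowerSeries.constantCoeff (-v * u⁻¹) = l ^ 2 := by
    rw [map_mul, map_neg, PowerSeries.constantCoeff_inv]
    have hv : PowerSeries.constantCoeff v
        = -(PowerSeries.constantCoeff u * l ^ 2) := by linear_combination hc
    rw [hv]
    field_simp
  obtain ⟨g, hg⟩ := exists_sqrt_s2 h2 (-v * u⁻¹) l hl hcc
  refine ⟨g, ?_⟩
  rw [hg]
  have h3 : u * (-v * u⁻¹) = -v * (u * u⁻¹) := by ring
  rw [h3, PowerSeries.mul_inv_cancel u hu]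
  ring

end Sqrt

lemma ofPS_coe {F : Type} [Field F] (p : Polynomial F) :
    (HahnSeries.ofPowerSeries ℤ F) (p : PowerSeries F)
      = Polynomial.aeval (HahnSeries.single (1:ℤ) (1:F)) p := by
  induction p using Polynomial.induction_on' with
  | add p q hp hq => rw [Polynomial.coe_add, map_add, map_add, hp, hq]
  | monomial n r =>
      rw [← Polynomial.C_mul_X_pow_eq_monomial]
      rw [Polynomial.coe_mul, Polynomial.coe_C, Polynomial.coe_pow, Polynomial.coe_X]
      rw [map_mul, map_pow, HahnSeries.ofPowerSeries_C, HahnSeries.ofPowerSeries_X]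
      rw [map_mul, map_pow, Polynomial.aeval_C, Polynomial.aeval_X]
      rw [show (algebraMap F (LaurentSeries F)) r
            = (HahnSeries.ofPowerSeries ℤ F) (PowerSeries.C r) from rfl,
          HahnSeries.ofPowerSeries_C]


/-- If the degrees of nonzero `a₁, a₂, a₃ ∈ 𝔽_q[t]` (`q` odd) all have the same
parity, then `a₁x₁² + a₂x₂² + a₃x₃² = 0` has a nontrivial solution in `𝔽_q((1/t))`, the
Laurent series field at infinity (where `t` is the inverse of the uniformizer `X`). -/
theorem stmt2 (Fq : Type) [Field Fq] [Fintype Fq] (hq : Odd (Fintype.card Fq))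
    (a : Fin 3 → Polynomial Fq) (ha : ∀ i, a i ≠ 0)
    (hpar : ∀ i j, (a i).natDegree % 2 = (a j).natDegree % 2) :
    ∃ x : Fin 3 → LaurentSeries Fq, x ≠ 0 ∧
      ∑ i, Polynomial.aeval ((HahnSeries.single (-1 : ℤ) (1 : Fq)) : LaurentSeries Fq) (a i)
        * x i ^ 2 = 0 := by
  classical
  have hcard : Fintype.card Fq % 2 = 1 := Nat.odd_iff.mp hq
  have hchar : ringChar Fq ≠ 2 := by
    intro h
    have := FiniteField.even_card_of_char_two h
    omega
  have h2 : (2 : Fq) ≠ 0 := Ring.two_ne_zero hchar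
  set T : LaurentSeries Fq := HahnSeries.single (-1 : ℤ) (1 : Fq) with hTdef
  set U : LaurentSeries Fq := HahnSeries.single (1 : ℤ) (1 : Fq) with hUdef
  have hTU : T * U = 1 := by
    rw [hTdef, hUdef, HahnSeries.single_mul_single]
    norm_num [HahnSeries.single_zero_one]
  have hUne : U ≠ 0 := right_ne_zero_of_mul_eq_one hTU
  letI : Invertible T := ⟨U, by rw [mul_comm]; exact hTU, hTU⟩
  have hinv : (⅟ T : LaurentSeries Fq) = U := rfl
  set c : Fin 3 → Fq := fun i => (a i).leadingCoeff with hcdef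
  have hcne : ∀ i, c i ≠ 0 := fun i => Polynomial.leadingCoeff_ne_zero.mpr (ha i)
  -- solve over the residue field
  have hdeg2 : (Polynomial.C (c 1) * Polynomial.X ^ 2 + Polynomial.C (c 2)).degree = 2 := by
    rw [Polynomial.degree_add_eq_left_of_degree_lt, Polynomial.degree_C_mul_X_pow 2 (hcne 1)]
    · norm_cast
    · rw [Polynomial.degree_C_mul_X_pow 2 (hcne 1)]
      exact lt_of_le_of_lt Polynomial.degree_C_le (by norm_num)
  obtain ⟨l0, l1, hl⟩ := FiniteField.exists_root_sum_quadratic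
    (f := Polynomial.C (c 0) * Polynomial.X ^ 2)
    (Polynomial.degree_C_mul_X_pow 2 (hcne 0)) hdeg2 hcard
  simp only [Polynomial.eval_add, Polynomial.eval_mul, Polynomial.eval_pow,
    Polynomial.eval_C, Polynomial.eval_X] at hl
  -- the reversed polynomials as power series
  set v : Fin 3 → PowerSeries Fq := fun i => (((a i).reverse : Polynomial Fq) : PowerSeries Fq)
    with hvdef
  have hvc : ∀ i, PowerSeries.constantCoeff (v i) = c i := by
    intro i
    rw [hvdef]
    simp only [Polynomial.constantCoeff_coe, Polynomial.coeff_zero_reverse]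
    rfl
  -- a nontrivial power series solution
  have hy : ∃ y : Fin 3 → PowerSeries Fq, y 2 = 1 ∧
      v 0 * y 0 ^ 2 + v 1 * y 1 ^ 2 + v 2 * y 2 ^ 2 = 0 := by
    by_cases h0 : l0 = 0
    · have h1 : l1 ≠ 0 := by
        intro h1
        apply hcne 2
        rw [h0, h1] at hl
        simpa using hl
      obtain ⟨g, hg⟩ := solve2 h2 (v 1) (v 0 * (PowerSeries.C l0) ^ 2 + v 2) l1 h1
        (by rw [hvc 1]; exact hcne 1)
        (by
          rw [map_add, map_mul, map_pow, PowerSeries.constantCoeff_C, hvc 0, hvc 1, hvc 2]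
          linear_combination hl)
      refine ⟨![PowerSeries.C l0, g, 1], rfl, ?_⟩
      simp only [Matrix.cons_val_zero, Matrix.cons_val_one, Matrix.head_cons,
        Matrix.cons_val_two, Matrix.tail_cons]
      linear_combination hg
    · obtain ⟨g, hg⟩ := solve2 h2 (v 0) (v 1 * (PowerSeries.C l1) ^ 2 + v 2) l0 h0
        (by rw [hvc 0]; exact hcne 0)
        (by
          rw [map_add, map_mul, map_pow, PowerSeries.constantCoeff_C, hvc 0, hvc 1, hvc 2]
          linear_combination hl)
      refine ⟨![g, PowerSeries.C l1, 1], rfl, ?_⟩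
      simp only [Matrix.cons_val_zero, Matrix.cons_val_one, Matrix.head_cons,
        Matrix.cons_val_two, Matrix.tail_cons]
      linear_combination hg
  obtain ⟨y, hy2, hyeq⟩ := hy
  set φ := (HahnSeries.ofPowerSeries ℤ Fq) with hφdef
  set r := (a 0).natDegree % 2 with hrdef
  refine ⟨fun i => φ (y i) * U ^ ((a i).natDegree / 2), ?_, ?_⟩
  · intro h
    have h22 := congrFun h 2
    simp only [hy2, map_one, one_mul, Pi.zero_apply] at h22
    exact pow_ne_zero _ hUne h22
  · have hterm : ∀ i : Fin 3,
        Polynomial.aeval T (a i) * (φ (y i) * U ^ ((a i).natDegree / 2)) ^ 2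
          = T ^ r * φ (v i * y i ^ 2) := by
      intro i
      set m := (a i).natDegree / 2 with hm
      have hkey : Polynomial.aeval U ((a i).reverse) * T ^ (a i).natDegree
          = Polynomial.aeval T (a i) := by
        have h := Polynomial.eval₂_reverse_mul_pow
          (algebraMap Fq (LaurentSeries Fq)) T (a i)
        rw [hinv] at h
        simpa [Polynomial.aeval_def] using h
      have hd : 2 * m + r = (a i).natDegree := by
        have hp := hpar i 0
        omega
      have e2 : T ^ (2 * m) * U ^ (2 * m) = 1 := by
        rw [← mul_pow, hTU, one_pow]
      have e1 : T ^ (a i).natDegree * U ^ (2 * m) = T ^ r := by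
        rw [← hd, pow_add]
        calc T ^ (2 * m) * T ^ r * U ^ (2 * m)
            = (T ^ (2 * m) * U ^ (2 * m)) * T ^ r := by
              ring
          _ = T ^ r := by rw [e2, one_mul]
      calc Polynomial.aeval T (a i) * (φ (y i) * U ^ m) ^ 2
          = (T ^ (a i).natDegree * U ^ (2 * m))
              * (Polynomial.aeval U ((a i).reverse) * φ (y i) ^ 2) := by
            rw [← hkey]; ring
        _ = T ^ r * (Polynomial.aeval U ((a i).reverse) * φ (y i) ^ 2) := by rw [e1]
        _ = T ^ r * φ (v i * y i ^ 2) := by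
            rw [hvdef, map_mul, map_pow, ofPS_coe]
    rw [Fin.sum_univ_three, hterm 0, hterm 1, hterm 2, ← mul_add, ← mul_add, ← map_add,
      ← map_add, hyeq, map_zero, mul_zero]
end

section
/- Let K be a field with a primitive n-th root of unity ε, and let a, a', b ∈ K*. Then the tensor product of symbol algebras (a,b;K,ε) ⊗_K (a',b;K,ε) is Brauer equivalent to (a·a', b; K, ε). -/
set_option synthInstance.maxHeartbeats 1000000
set_option maxHeartbeats 1000000

open scoped TensorProduct

/-- The defining relations of the symbol algebra `(a,b;K,ε)`: generators `u = ι 0`, `v = ι 1`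
with `uⁿ = a`, `vⁿ = b`, `uv = ε·vu`. -/
def SymbolRel (K : Type) [Field K] (n : ℕ) (ε a b : K) :
    FreeAlgebra K (Fin 2) → FreeAlgebra K (Fin 2) → Prop := fun p q =>
  (p = (FreeAlgebra.ι K (0 : Fin 2)) ^ n ∧ q = algebraMap K _ a) ∨
  (p = (FreeAlgebra.ι K (1 : Fin 2)) ^ n ∧ q = algebraMap K _ b) ∨
  (p = FreeAlgebra.ι K (0 : Fin 2) * FreeAlgebra.ι K (1 : Fin 2) ∧
    q = algebraMap K _ ε * (FreeAlgebra.ι K (1 : Fin 2) * FreeAlgebra.ι K (0 : Fin 2)))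

/-- The symbol algebra `(a,b;K,ε)`. -/
noncomputable def SymbolAlgebra (K : Type) [Field K] (n : ℕ) (ε a b : K) : Type :=
  RingQuot (SymbolRel K n ε a b)

noncomputable instance (K : Type) [Field K] (n : ℕ) (ε a b : K) :
    Ring (SymbolAlgebra K n ε a b) := by unfold SymbolAlgebra; infer_instance

noncomputable instance (K : Type) [Field K] (n : ℕ) (ε a b : K) :
    Algebra K (SymbolAlgebra K n ε a b) := by unfold SymbolAlgebra; infer_instance

namespace Stmt7

/-- the ring structure, as a definition not unfolded by instance search -/
noncomputable def ringSA (K : Type) [Field K] (n : ℕ) (ε a b : K) : Ring (SymbolAlgebra K n ε a b) :=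
  instRingSymbolAlgebra K n ε a b

/-- the algebra structure over `ringSA` -/
noncomputable def algSA (K : Type) [Field K] (n : ℕ) (ε a b : K) :
    @Algebra K (SymbolAlgebra K n ε a b) _ (@Ring.toSemiring _ (ringSA K n ε a b)) :=
  instAlgebraSymbolAlgebra K n ε a b

attribute [local instance] ringSA algSA

open Fin.NatCast

variable {K : Type} [Field K] {n : ℕ} {ε a b : K}

/-- generator u -/
noncomputable def uu (K : Type) [Field K] (n : ℕ) (ε a b : K) : SymbolAlgebra K n ε a b :=
  RingQuot.mkAlgHom K (SymbolRel K n ε a b) (FreeAlgebra.ι K 0)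

/-- generator v -/
noncomputable def vv (K : Type) [Field K] (n : ℕ) (ε a b : K) : SymbolAlgebra K n ε a b :=
  RingQuot.mkAlgHom K (SymbolRel K n ε a b) (FreeAlgebra.ι K 1)

lemma uu_pow : (uu K n ε a b) ^ n = algebraMap K _ a := by
  have hr : SymbolRel K n ε a b ((FreeAlgebra.ι K (0 : Fin 2)) ^ n)
      (algebraMap K (FreeAlgebra K (Fin 2)) a) := Or.inl ⟨rfl, rfl⟩
  have h := RingQuot.mkAlgHom_rel K hr
  rw [map_pow, AlgHom.commutes] at h
  exact h

lemma vv_pow : (vv K n ε a b) ^ n = algebraMap K _ b := by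
  have hr : SymbolRel K n ε a b ((FreeAlgebra.ι K (1 : Fin 2)) ^ n)
      (algebraMap K (FreeAlgebra K (Fin 2)) b) := Or.inr (Or.inl ⟨rfl, rfl⟩)
  have h := RingQuot.mkAlgHom_rel K hr
  rw [map_pow, AlgHom.commutes] at h
  exact h

lemma uv_rel : (uu K n ε a b) * (vv K n ε a b) = ε • ((vv K n ε a b) * (uu K n ε a b)) := by
  have hr : SymbolRel K n ε a b
      (FreeAlgebra.ι K (0 : Fin 2) * FreeAlgebra.ι K (1 : Fin 2))
      (algebraMap K (FreeAlgebra K (Fin 2)) ε *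
        (FreeAlgebra.ι K (1 : Fin 2) * FreeAlgebra.ι K (0 : Fin 2))) := Or.inr (Or.inr ⟨rfl, rfl⟩)
  have h := RingQuot.mkAlgHom_rel K hr
  rw [map_mul, map_mul, map_mul, AlgHom.commutes] at h
  rw [Algebra.smul_def]
  exact h

lemma toHom_rel {B : Type*} [Ring B] [Algebra K B] (U V : B)
    (hU : U ^ n = algebraMap K B a) (hV : V ^ n = algebraMap K B b)
    (hUV : U * V = algebraMap K B ε * (V * U)) :
    ∀ ⦃x y⦄, SymbolRel K n ε a b x y →
      FreeAlgebra.lift K ![U, V] x = FreeAlgebra.lift K ![U, V] y := by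
  rintro x y (⟨rfl, rfl⟩ | ⟨rfl, rfl⟩ | ⟨rfl, rfl⟩) <;>
    simp [hU, hV, hUV]

/-- universal property -/
noncomputable def toHom {B : Type*} [Ring B] [Algebra K B] (U V : B)
    (hU : U ^ n = algebraMap K B a) (hV : V ^ n = algebraMap K B b)
    (hUV : U * V = algebraMap K B ε * (V * U)) :
    SymbolAlgebra K n ε a b →ₐ[K] B :=
  RingQuot.liftAlgHom K ⟨FreeAlgebra.lift K ![U, V], toHom_rel U V hU hV hUV⟩

@[simp] lemma toHom_u {B : Type*} [Ring B] [Algebra K B] (U V : B)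
    (hU : U ^ n = algebraMap K B a) (hV : V ^ n = algebraMap K B b)
    (hUV : U * V = algebraMap K B ε * (V * U)) :
    toHom U V hU hV hUV (uu K n ε a b) = U := by
  have h := RingQuot.liftAlgHom_mkAlgHom_apply K (FreeAlgebra.lift K ![U, V])
    (toHom_rel U V hU hV hUV) (FreeAlgebra.ι K (0 : Fin 2))
  exact h.trans (by simp)

@[simp] lemma toHom_v {B : Type*} [Ring B] [Algebra K B] (U V : B)
    (hU : U ^ n = algebraMap K B a) (hV : V ^ n = algebraMap K B b)
    (hUV : U * V = algebraMap K B ε * (V * U)) :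
    toHom U V hU hV hUV (vv K n ε a b) = V := by
  have h := RingQuot.liftAlgHom_mkAlgHom_apply K (FreeAlgebra.lift K ![U, V])
    (toHom_rel U V hU hV hUV) (FreeAlgebra.ι K (1 : Fin 2))
  exact h.trans (by simp)

section Rules

lemma u_mul_vpow (j : ℕ) :
    uu K n ε a b * (vv K n ε a b) ^ j = (ε ^ j) • ((vv K n ε a b) ^ j * uu K n ε a b) := by
  induction j with
  | zero => simp
  | succ j ih =>
    calc uu K n ε a b * (vv K n ε a b) ^ (j + 1)
        = (uu K n ε a b * (vv K n ε a b) ^ j) * vv K n ε a b := by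
          rw [pow_succ, mul_assoc]
      _ = ε ^ j • ((vv K n ε a b) ^ j * (uu K n ε a b * vv K n ε a b)) := by
          rw [ih, smul_mul_assoc, mul_assoc]
      _ = ε ^ (j + 1) • ((vv K n ε a b) ^ (j + 1) * uu K n ε a b) := by
          rw [uv_rel, mul_smul_comm, smul_smul, pow_succ, ← mul_assoc, ← pow_succ, ← pow_succ]

lemma upow_mul_v (i : ℕ) :
    (uu K n ε a b) ^ i * vv K n ε a b = (ε ^ i) • (vv K n ε a b * (uu K n ε a b) ^ i) := by
  induction i with
  | zero => simp
  | succ i ih =>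
    calc (uu K n ε a b) ^ (i + 1) * vv K n ε a b
        = uu K n ε a b * ((uu K n ε a b) ^ i * vv K n ε a b) := by
          rw [pow_succ', mul_assoc]
      _ = ε ^ i • ((uu K n ε a b * vv K n ε a b) * (uu K n ε a b) ^ i) := by
          rw [ih, mul_smul_comm, mul_assoc]
      _ = ε ^ (i + 1) • (vv K n ε a b * (uu K n ε a b) ^ (i + 1)) := by
          rw [uv_rel, smul_mul_assoc, smul_smul, pow_succ, mul_assoc, ← pow_succ']

lemma v_mul_upow (hε0 : ε ≠ 0) (i : ℕ) :
    vv K n ε a b * (uu K n ε a b) ^ i = ((ε ^ i)⁻¹) • ((uu K n ε a b) ^ i * vv K n ε a b) := by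
  rw [upow_mul_v, smul_smul, inv_mul_cancel₀ (pow_ne_zero i hε0), one_smul]

lemma upow_reduce (m : ℕ) :
    (uu K n ε a b) ^ m = (a ^ (m / n)) • (uu K n ε a b) ^ (m % n) := by
  conv_lhs => rw [← Nat.div_add_mod m n]
  rw [pow_add, pow_mul, uu_pow, ← map_pow, ← Algebra.smul_def]

lemma vpow_reduce (m : ℕ) :
    (vv K n ε a b) ^ m = (b ^ (m / n)) • (vv K n ε a b) ^ (m % n) := by
  conv_lhs => rw [← Nat.div_add_mod m n]
  rw [pow_add, pow_mul, vv_pow, ← map_pow, ← Algebra.smul_def]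

/-- induction principle on generators -/
@[elab_as_elim]
lemma induction_on {p : SymbolAlgebra K n ε a b → Prop}
    (alg : ∀ c : K, p (algebraMap K (SymbolAlgebra K n ε a b) c))
    (hu : p (uu K n ε a b)) (hv : p (vv K n ε a b))
    (mul : ∀ x y, p x → p y → p (x * y))
    (add : ∀ x y, p x → p y → p (x + y)) (x : SymbolAlgebra K n ε a b) : p x := by
  obtain ⟨y, rfl⟩ := RingQuot.mkAlgHom_surjective K (SymbolRel K n ε a b) x
  induction y with
  | grade0 c =>
    have h : RingQuot.mkAlgHom K (SymbolRel K n ε a b) (algebraMap K (FreeAlgebra K (Fin 2)) c)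
        = algebraMap K (SymbolAlgebra K n ε a b) c :=
      AlgHom.commutes (RingQuot.mkAlgHom K (SymbolRel K n ε a b)) c
    rw [h]
    exact alg c
  | grade1 i =>
    fin_cases i
    · exact hu
    · exact hv
  | mul x y hx hy => rw [map_mul]; exact mul _ _ hx hy
  | add x y hx hy => rw [map_add]; exact add _ _ hx hy

/-- the monomial family -/
noncomputable def mono (K : Type) [Field K] (n : ℕ) (ε a b : K) :
    Fin n × Fin n → SymbolAlgebra K n ε a b :=
  fun p => (uu K n ε a b) ^ (p.1 : ℕ) * (vv K n ε a b) ^ (p.2 : ℕ)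

lemma mono_mem (hn : 0 < n) (i j : ℕ) :
    (uu K n ε a b) ^ i * (vv K n ε a b) ^ j ∈
      Submodule.span K (Set.range (mono K n ε a b)) := by
  rw [upow_reduce, vpow_reduce, smul_mul_assoc, mul_smul_comm, smul_smul]
  refine Submodule.smul_mem _ _ (Submodule.subset_span ?_)
  exact ⟨(⟨i % n, Nat.mod_lt _ hn⟩, ⟨j % n, Nat.mod_lt _ hn⟩), rfl⟩

lemma span_mono (hn : 0 < n) (hε0 : ε ≠ 0) :
    Submodule.span K (Set.range (mono K n ε a b)) = ⊤ := by
  set S := Submodule.span K (Set.range (mono K n ε a b)) with hS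
  have hu : ∀ y ∈ S, uu K n ε a b * y ∈ S := by
    have hmap : Submodule.map (LinearMap.mulLeft K (uu K n ε a b)) S ≤ S := by
      rw [hS, Submodule.map_span, Submodule.span_le]
      rintro _ ⟨_, ⟨p, rfl⟩, rfl⟩
      have := mono_mem (ε := ε) (a := a) (b := b) hn ((p.1 : ℕ) + 1) (p.2 : ℕ)
      simpa [LinearMap.mulLeft_apply, mono, ← mul_assoc, ← pow_succ'] using this
    intro y hy
    exact hmap ⟨y, hy, rfl⟩
  have hv : ∀ y ∈ S, vv K n ε a b * y ∈ S := by
    have hmap : Submodule.map (LinearMap.mulLeft K (vv K n ε a b)) S ≤ S := by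
      rw [hS, Submodule.map_span, Submodule.span_le]
      rintro _ ⟨_, ⟨p, rfl⟩, rfl⟩
      have h1 : vv K n ε a b * ((uu K n ε a b) ^ (p.1 : ℕ) * (vv K n ε a b) ^ (p.2 : ℕ))
          = ((ε ^ (p.1 : ℕ))⁻¹) •
            ((uu K n ε a b) ^ (p.1 : ℕ) * (vv K n ε a b) ^ ((p.2 : ℕ) + 1)) := by
        rw [← mul_assoc, v_mul_upow hε0, smul_mul_assoc, mul_assoc, ← pow_succ']
      simp only [LinearMap.mulLeft_apply, mono, h1]
      exact Submodule.smul_mem _ _ (mono_mem hn _ _)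
    intro y hy
    exact hmap ⟨y, hy, rfl⟩
  have hmul : ∀ x : SymbolAlgebra K n ε a b, ∀ y ∈ S, x * y ∈ S := by
    intro x
    refine induction_on (p := fun x => ∀ y ∈ S, x * y ∈ S) ?_ hu hv ?_ ?_ x
    · intro c y hy
      rw [← Algebra.smul_def]
      exact Submodule.smul_mem _ _ hy
    · intro x₁ x₂ h1 h2 y hy
      rw [mul_assoc]
      exact h1 _ (h2 _ hy)
    · intro x₁ x₂ h1 h2 y hy
      rw [add_mul]
      exact Submodule.add_mem _ (h1 _ hy) (h2 _ hy)
  rw [eq_top_iff]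
  intro x _
  have h1 : (1 : SymbolAlgebra K n ε a b) ∈ S := by
    simpa using mono_mem (ε := ε) (a := a) (b := b) hn 0 0
  simpa using hmul x 1 h1

end Rules

section Rep

variable (n : ℕ) (R : Type) [CommRing R] [Algebra K R]

/-- shift operator with twist `a` -/
noncomputable def Uop [NeZero n] (a : K) : (Fin n → R) →ₗ[K] (Fin n → R) where
  toFun f i := (if (i : ℕ) + 1 = n then a else 1) • f (i + 1)
  map_add' f g := by funext i; exact smul_add _ _ _
  map_smul' c f := by funext i; exact smul_comm _ _ _

/-- diagonal operator -/
noncomputable def Vop (ε : K) (r : R) : (Fin n → R) →ₗ[K] (Fin n → R) where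
  toFun f i := (ε ^ (i : ℕ)) • (r * f i)
  map_add' f g := by
    funext i
    show (ε ^ (i : ℕ)) • (r * (f i + g i)) = (ε ^ (i : ℕ)) • (r * f i) + (ε ^ (i : ℕ)) • (r * g i)
    rw [mul_add, smul_add]
  map_smul' c f := by
    funext i
    show (ε ^ (i : ℕ)) • (r * (c • f i)) = c • ((ε ^ (i : ℕ)) • (r * f i))
    rw [mul_smul_comm, smul_comm]

variable {n R}

lemma Uop_pow_apply [NeZero n] (a : K) (k : ℕ) (f : Fin n → R) (i : Fin n) :
    ((Uop n R a) ^ k) f i =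
      (∏ t ∈ Finset.range k, (if Fin.val (i + (t : Fin n)) + 1 = n then a else 1)) •
        f (i + (k : Fin n)) := by
  induction k generalizing f with
  | zero => simp
  | succ k ih =>
    rw [pow_succ, Module.End.mul_apply, ih (Uop n R a f)]
    show _ • ((if Fin.val ((i + (k : Fin n)) : Fin n) + 1 = n then a else 1)
      • f ((i + (k : Fin n)) + 1)) = _
    rw [smul_smul,
      ← Finset.prod_range_succ (fun t => if Fin.val (i + (t : Fin n)) + 1 = n then a else 1)]
    congr 1
    push_cast
    rw [add_assoc]

lemma Vop_pow_apply (ε : K) (r : R) (k : ℕ) (f : Fin n → R) (i : Fin n) :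
    ((Vop n R ε r) ^ k) f i = (ε ^ ((i : ℕ) * k)) • (r ^ k * f i) := by
  induction k generalizing f with
  | zero => simp
  | succ k ih =>
    rw [pow_succ, Module.End.mul_apply, ih (Vop n R ε r f)]
    show ε ^ ((i : ℕ) * k) • (r ^ k * ((ε ^ (i : ℕ)) • (r * f i))) = _
    rw [mul_smul_comm, smul_smul, ← pow_add, ← mul_assoc, ← pow_succ, Nat.mul_succ]

lemma pow_mod_n (hε1 : ε ^ n = 1) (m : ℕ) : ε ^ (m % n) = ε ^ m := by
  conv_rhs => rw [← Nat.div_add_mod m n]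
  rw [pow_add, pow_mul, hε1, one_pow, one_mul]

lemma prod_cfac [NeZero n] (a : K) (i : Fin n) :
    (∏ t ∈ Finset.range n, (if Fin.val (i + (t : Fin n)) + 1 = n then a else 1)) = a := by
  have hn : 0 < n := Nat.pos_of_ne_zero (NeZero.ne n)
  rw [← Fin.prod_univ_eq_prod_range (fun t => if Fin.val (i + (t : Fin n)) + 1 = n then a else 1)]
  have h1 : (∏ t : Fin n, if Fin.val (i + ((Fin.val t : ℕ) : Fin n)) + 1 = n then a else 1)
      = ∏ s : Fin n, (if Fin.val s + 1 = n then a else 1) := by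
    apply Fintype.prod_equiv (Equiv.addLeft i)
    intro t
    rw [Fin.cast_val_eq_self, Equiv.coe_addLeft]
  rw [h1]
  have key : ∀ s : Fin n, (if Fin.val s + 1 = n then a else 1)
      = if s = (⟨n - 1, by omega⟩ : Fin n) then a else 1 := by
    intro s
    by_cases h : Fin.val s + 1 = n
    · rw [if_pos h, if_pos (Fin.ext (show Fin.val s = n - 1 by omega))]
    · rw [if_neg h, if_neg (fun hc => h (by rw [hc]; exact (show n - 1 + 1 = n by omega)))]
  rw [Finset.prod_congr rfl (fun s _ => key s),
    Finset.prod_ite_eq' Finset.univ _ (fun _ : Fin n => a), if_pos (Finset.mem_univ _)]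

lemma Uop_pow_n [NeZero n] (a : K) :
    (Uop n R a) ^ n = algebraMap K (Module.End K (Fin n → R)) a := by
  apply LinearMap.ext
  intro f
  funext i
  rw [Uop_pow_apply, Module.algebraMap_end_apply, prod_cfac, Fin.natCast_self, add_zero]
  rfl

lemma Vop_pow_n (hε1 : ε ^ n = 1) (r : R) (hr : r ^ n = algebraMap K R b) :
    (Vop n R ε r) ^ n = algebraMap K (Module.End K (Fin n → R)) b := by
  apply LinearMap.ext
  intro f
  funext i
  rw [Vop_pow_apply, Module.algebraMap_end_apply, mul_comm (i : ℕ) n, pow_mul, hε1, one_pow,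
    one_smul, hr, ← Algebra.smul_def]
  rfl

lemma Uop_Vop_rel [NeZero n] (hε1 : ε ^ n = 1) (a : K) (r : R) :
    (Uop n R a) * (Vop n R ε r) =
      algebraMap K (Module.End K (Fin n → R)) ε * ((Vop n R ε r) * (Uop n R a)) := by
  apply LinearMap.ext
  intro f
  funext i
  rw [Module.End.mul_apply, Module.End.mul_apply, Module.End.mul_apply,
    Module.algebraMap_end_apply]
  show (if (i : ℕ) + 1 = n then a else 1) • ((ε ^ ((i + 1 : Fin n) : ℕ)) • (r * f (i + 1)))
      = ε • ((ε ^ (i : ℕ)) • (r * ((if (i : ℕ) + 1 = n then a else 1) • f (i + 1))))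
  rw [mul_smul_comm, smul_smul, smul_smul, smul_smul]
  congr 1
  have hval : ((i + 1 : Fin n) : ℕ) = ((i : ℕ) + 1) % n := by
    rw [Fin.val_add, Fin.val_one', Nat.add_mod_mod]
  rw [hval, pow_mod_n hε1, pow_succ]
  ring

end Rep

section IndepBasis

open Polynomial

lemma rep_mono_apply [NeZero n] {R : Type} [CommRing R] [Algebra K R] (r : R)
    (ρ : SymbolAlgebra K n ε a b →ₐ[K] Module.End K (Fin n → R))
    (hu : ρ (uu K n ε a b) = Uop n R a) (hv : ρ (vv K n ε a b) = Vop n R ε r)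
    (p : Fin n × Fin n) :
    (ρ (mono K n ε a b p)) (Pi.single (0 : Fin n) (1 : R))
      = (∏ t ∈ Finset.range ((p.1 : ℕ)), (if Fin.val (-p.1 + (t : Fin n)) + 1 = n then a else 1))
          • (Pi.single (-p.1) (r ^ (p.2 : ℕ)) : Fin n → R) := by
  obtain ⟨i, j⟩ := p
  rw [mono, map_mul, map_pow, map_pow, hu, hv, Module.End.mul_apply]
  have hVδ : ((Vop n R ε r) ^ (j : ℕ)) (Pi.single (0 : Fin n) (1 : R))
      = Pi.single 0 (r ^ (j : ℕ)) := by
    funext i'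
    rw [Vop_pow_apply]
    by_cases h : i' = (0 : Fin n)
    · subst h; simp
    · simp [Pi.single_eq_of_ne h]
  rw [hVδ]
  funext i'
  rw [Uop_pow_apply, Fin.cast_val_eq_self]
  by_cases h : i' = -i
  · subst h
    rw [neg_add_cancel]
    simp
  · have h2 : i' + i ≠ 0 := fun hc => h (eq_neg_of_add_eq_zero_left hc)
    rw [Pi.single_eq_of_ne h2, Pi.smul_apply, Pi.single_eq_of_ne h]
    simp

lemma mono_linearIndependent (hn : 0 < n) (hε1 : ε ^ n = 1) (ha : a ≠ 0) :
    LinearIndependent K (mono K n ε a b) := by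
  haveI : NeZero n := ⟨hn.ne'⟩
  have hmonic : (X ^ n - C b : K[X]).Monic := monic_X_pow_sub_C b hn.ne'
  set R := AdjoinRoot (X ^ n - C b : K[X]) with hR
  set r : R := AdjoinRoot.root _ with hrdef
  have hr : r ^ n = algebraMap K R b := by
    have h0 : AdjoinRoot.mk (X ^ n - C b : K[X]) ((X : K[X]) ^ n - C b) = 0 :=
      AdjoinRoot.mk_self
    rw [map_sub, map_pow, AdjoinRoot.mk_X, AdjoinRoot.mk_C, sub_eq_zero] at h0
    rw [AdjoinRoot.algebraMap_eq]
    exact h0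
  -- representation
  set ρ : SymbolAlgebra K n ε a b →ₐ[K] Module.End K (Fin n → R) :=
    toHom (Uop n R a) (Vop n R ε r) (Uop_pow_n a) (Vop_pow_n hε1 r hr) (Uop_Vop_rel hε1 a r)
    with hρ
  have hu : ρ (uu K n ε a b) = Uop n R a := toHom_u _ _ _ _ _
  have hv : ρ (vv K n ε a b) = Vop n R ε r := toHom_v _ _ _ _ _
  -- nonvanishing of the twisting scalars
  have hW : ∀ i : Fin n,
      (∏ t ∈ Finset.range ((i : ℕ)), (if Fin.val (-i + (t : Fin n)) + 1 = n then a else 1)) ≠ 0 := by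
    intro i
    rw [Finset.prod_ne_zero_iff]
    intro t _
    split
    · exact ha
    · exact one_ne_zero
  -- basis of R
  have hdim : (AdjoinRoot.powerBasis' hmonic).dim = n := by
    rw [AdjoinRoot.powerBasis'_dim, natDegree_X_pow_sub_C]
  set bR : Module.Basis (Fin n) K R := (AdjoinRoot.powerBasis' hmonic).basis.reindex (finCongr hdim)
    with hbRdef
  have hbR : ∀ j : Fin n, bR j = r ^ (j : ℕ) := by
    intro j
    rw [hbRdef, Module.Basis.reindex_apply, PowerBasis.coe_basis, AdjoinRoot.powerBasis'_gen]
    congr 1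
  set bM : Module.Basis ((_ : Fin n) × Fin n) K (Fin n → R) := Pi.basis (fun _ => bR) with hbM
  set E : (Fin n × Fin n) ≃ ((_ : Fin n) × Fin n) :=
    { toFun := fun p => ⟨-p.1, p.2⟩
      invFun := fun q => (-q.1, q.2)
      left_inv := fun p => by simp
      right_inv := fun q => by simp } with hE
  set B2 : Module.Basis (Fin n × Fin n) K (Fin n → R) :=
    (bM.reindex E.symm).unitsSMul (fun p => Units.mk0 _ (hW p.1)) with hB2def
  have hB2 : ∀ p : Fin n × Fin n,
      B2 p = (ρ (mono K n ε a b p)) (Pi.single (0 : Fin n) (1 : R)) := by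
    intro p
    rw [hB2def, Module.Basis.unitsSMul_apply, Module.Basis.reindex_apply, Equiv.symm_symm,
      rep_mono_apply r ρ hu hv p]
    have hb : bM (E p) = (Pi.single (-p.1) (r ^ (p.2 : ℕ)) : Fin n → R) := by
      rw [hbM]
      show Pi.basis (fun _ => bR) ⟨-p.1, p.2⟩ = _
      rw [Pi.basis_apply, hbR]
    rw [hb, Units.smul_def]
    rfl
  have hGind : LinearIndependent K
      (fun p => (ρ (mono K n ε a b p)) (Pi.single (0 : Fin n) (1 : R))) := by
    have hfun : ⇑B2 = (fun p => (ρ (mono K n ε a b p)) (Pi.single (0 : Fin n) (1 : R))) :=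
      funext hB2
    rw [← hfun]
    exact B2.linearIndependent
  refine LinearIndependent.of_comp
    ((LinearMap.applyₗ (Pi.single (0 : Fin n) (1 : R))).comp ρ.toLinearMap) ?_
  exact hGind

/-- the monomial basis of the symbol algebra -/
noncomputable def symBasis (hn : 0 < n) (hε1 : ε ^ n = 1) (hε0 : ε ≠ 0) (ha : a ≠ 0) :
    Module.Basis (Fin n × Fin n) K (SymbolAlgebra K n ε a b) :=
  Module.Basis.mk (mono_linearIndependent hn hε1 ha) (span_mono hn hε0).ge

lemma symBasis_apply (hn : 0 < n) (hε1 : ε ^ n = 1) (hε0 : ε ≠ 0) (ha : a ≠ 0)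
    (p : Fin n × Fin n) :
    symBasis hn hε1 hε0 ha p = (uu K n ε a b) ^ (p.1 : ℕ) * (vv K n ε a b) ^ (p.2 : ℕ) :=
  Module.Basis.mk_apply _ _ _

end IndepBasis

lemma fin_sub_val {n : ℕ} [NeZero n] (j l : Fin n) :
    ((j - l : Fin n) : ℕ) = ((j : ℕ) + (n - 1) * (l : ℕ)) % n := by
  rw [Fin.sub_def]
  show ((n - (l : ℕ)) + (j : ℕ)) % n = _
  have h : (n - (l : ℕ) + (j : ℕ)) ≡ ((j : ℕ) + (n - 1) * (l : ℕ)) [MOD n] := by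
    apply Nat.ModEq.add_right_cancel' (l : ℕ)
    have e1 : (n - (l : ℕ) + (j : ℕ)) + (l : ℕ) = (j : ℕ) + n := by
      have := l.isLt; omega
    have e2 : ((j : ℕ) + (n - 1) * (l : ℕ)) + (l : ℕ) = (j : ℕ) + n * (l : ℕ) := by
      have h3 : (n - 1) + 1 = n := Nat.succ_pred_eq_of_pos (Nat.pos_of_ne_zero (NeZero.ne n))
      calc ((j : ℕ) + (n - 1) * (l : ℕ)) + (l : ℕ)
          = (j : ℕ) + ((n - 1) + 1) * (l : ℕ) := by ring
        _ = (j : ℕ) + n * (l : ℕ) := by rw [h3]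
    rw [e1, e2]
    show ((j : ℕ) + n) % n = ((j : ℕ) + n * (l : ℕ)) % n
    rw [Nat.add_mod_right, Nat.add_mul_mod_self_left]
  exact h

/-- `1×1` matrices -/
noncomputable def matrixOneEquiv (R : Type*) [Ring R] [Algebra K R] :
    Matrix (Fin 1) (Fin 1) R ≃ₐ[K] R where
  toFun M := M 0 0
  invFun x := Matrix.of (fun _ _ => x)
  left_inv M := by ext i j; fin_cases i; fin_cases j; rfl
  right_inv x := rfl
  map_mul' M N := by simp [Matrix.mul_apply]
  map_add' M N := rfl
  commutes' c := by simp [Matrix.algebraMap_matrix_apply]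

lemma commute_hom_range {B : Type*} [Ring B] [Algebra K B]
    (f : SymbolAlgebra K n ε a b →ₐ[K] B) (z : B)
    (h1 : Commute (f (uu K n ε a b)) z) (h2 : Commute (f (vv K n ε a b)) z)
    (x : SymbolAlgebra K n ε a b) : Commute (f x) z := by
  induction x using induction_on with
  | alg c => rw [AlgHom.commutes]; exact Algebra.commutes c z
  | hu => exact h1
  | hv => exact h2
  | mul x y hx hy => rw [map_mul]; exact hx.mul_left hy
  | add x y hx hy => rw [map_add]; exact hx.add_left hy

open Stmt7 in
open Fin.NatCast in
open scoped TensorProduct in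
theorem stmt7_aux (K : Type) [Field K] (n : ℕ) (hn : 0 < n) (ε : K)
    (hε : IsPrimitiveRoot ε n) (a a' b : K) (ha : a ≠ 0) (ha' : a' ≠ 0) (hb : b ≠ 0) :
    ∃ r s : ℕ, 0 < r ∧ 0 < s ∧
      Nonempty ((Matrix (Fin r) (Fin r)
          (SymbolAlgebra K n ε a b ⊗[K] SymbolAlgebra K n ε a' b))
        ≃ₐ[K] Matrix (Fin s) (Fin s) (SymbolAlgebra K n ε (a * a') b)) := by
  haveI : NeZero n := ⟨hn.ne'⟩
  have hε1 : ε ^ n = 1 := hε.pow_eq_one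
  have hε0 : ε ≠ 0 := by
    intro h
    rw [h, zero_pow hn.ne'] at hε1
    exact zero_ne_one hε1
  -- ### the first map Φ : (aa',b) → (a,b) ⊗ (a',b)
  have hΦU : ((uu K n ε a b) ⊗ₜ[K] (uu K n ε a' b)
        : SymbolAlgebra K n ε a b ⊗[K] SymbolAlgebra K n ε a' b) ^ n
      = algebraMap K _ (a * a') := by
    rw [Algebra.TensorProduct.tmul_pow, uu_pow, uu_pow,
      Algebra.algebraMap_eq_smul_one (A := SymbolAlgebra K n ε a b),
      Algebra.algebraMap_eq_smul_one (A := SymbolAlgebra K n ε a' b),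
      TensorProduct.tmul_smul, ← TensorProduct.smul_tmul', smul_smul,
      ← Algebra.TensorProduct.one_def, mul_comm a' a, ← Algebra.algebraMap_eq_smul_one]
  have hΦV : ((vv K n ε a b) ⊗ₜ[K] (1 : SymbolAlgebra K n ε a' b)) ^ n
      = algebraMap K _ b := by
    rw [Algebra.TensorProduct.tmul_pow, vv_pow, one_pow, Algebra.TensorProduct.algebraMap_apply]
  have hΦUV : ((uu K n ε a b) ⊗ₜ[K] (uu K n ε a' b)) *
        ((vv K n ε a b) ⊗ₜ[K] (1 : SymbolAlgebra K n ε a' b))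
      = algebraMap K _ ε * (((vv K n ε a b) ⊗ₜ[K] (1 : SymbolAlgebra K n ε a' b)) *
        ((uu K n ε a b) ⊗ₜ[K] (uu K n ε a' b))) := by
    rw [Algebra.TensorProduct.tmul_mul_tmul, Algebra.TensorProduct.tmul_mul_tmul,
      uv_rel, mul_one, one_mul, ← Algebra.smul_def, TensorProduct.smul_tmul']
  set Φ : SymbolAlgebra K n ε (a * a') b →ₐ[K]
      SymbolAlgebra K n ε a b ⊗[K] SymbolAlgebra K n ε a' b :=
    toHom (B := SymbolAlgebra K n ε a b ⊗[K] SymbolAlgebra K n ε a' b) _ _ hΦU hΦV hΦUV with hΦ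
  -- ### the second map Φ' : (a',1) → (a,b) ⊗ (a',b)
  have hXn : ((1 : SymbolAlgebra K n ε a b) ⊗ₜ[K] (uu K n ε a' b)) ^ n
      = algebraMap K _ a' := by
    rw [Algebra.TensorProduct.tmul_pow, uu_pow, one_pow,
      Algebra.algebraMap_eq_smul_one (A := SymbolAlgebra K n ε a' b),
      TensorProduct.tmul_smul, ← Algebra.TensorProduct.one_def,
      ← Algebra.algebraMap_eq_smul_one]
  have hY1 : ((b⁻¹ • (vv K n ε a b) ^ (n - 1))) ^ n
      = algebraMap K (SymbolAlgebra K n ε a b) ((b⁻¹) ^ n * b ^ (n - 1)) := by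
    rw [smul_pow, ← pow_mul, mul_comm (n - 1) n, pow_mul, vv_pow, ← map_pow,
      Algebra.smul_def, ← map_mul]
  have hYn : ((b⁻¹ • (vv K n ε a b) ^ (n - 1)) ⊗ₜ[K] (vv K n ε a' b)) ^ n
      = algebraMap K _ (1 : K) := by
    rw [Algebra.TensorProduct.tmul_pow, hY1, vv_pow, map_one,
      Algebra.algebraMap_eq_smul_one (A := SymbolAlgebra K n ε a b),
      Algebra.algebraMap_eq_smul_one (A := SymbolAlgebra K n ε a' b),
      TensorProduct.tmul_smul, ← TensorProduct.smul_tmul', smul_smul,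
      ← Algebra.TensorProduct.one_def]
    have hscal : b * ((b⁻¹) ^ n * b ^ (n - 1)) = 1 := by
      rw [mul_comm, mul_assoc, ← pow_succ, Nat.sub_add_cancel hn, inv_pow,
        inv_mul_cancel₀ (pow_ne_zero n hb)]
    rw [hscal, one_smul]
  have hXY : ((1 : SymbolAlgebra K n ε a b) ⊗ₜ[K] (uu K n ε a' b)) *
        ((b⁻¹ • (vv K n ε a b) ^ (n - 1)) ⊗ₜ[K] (vv K n ε a' b))
      = algebraMap K _ ε * (((b⁻¹ • (vv K n ε a b) ^ (n - 1)) ⊗ₜ[K] (vv K n ε a' b)) *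
        ((1 : SymbolAlgebra K n ε a b) ⊗ₜ[K] (uu K n ε a' b))) := by
    rw [Algebra.TensorProduct.tmul_mul_tmul, Algebra.TensorProduct.tmul_mul_tmul,
      uv_rel, mul_one, one_mul, ← Algebra.smul_def, TensorProduct.tmul_smul]
  set Φ' : SymbolAlgebra K n ε a' 1 →ₐ[K]
      SymbolAlgebra K n ε a b ⊗[K] SymbolAlgebra K n ε a' b :=
    toHom (B := SymbolAlgebra K n ε a b ⊗[K] SymbolAlgebra K n ε a' b) _ _ hXn hYn hXY with hΦ'
  have hΦu : Φ (uu K n ε (a * a') b) = (uu K n ε a b) ⊗ₜ[K] (uu K n ε a' b) := toHom_u _ _ _ _ _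
  have hΦv : Φ (vv K n ε (a * a') b) = (vv K n ε a b) ⊗ₜ[K] 1 := toHom_v _ _ _ _ _
  have hΦ'u : Φ' (uu K n ε a' 1) = (1 : SymbolAlgebra K n ε a b) ⊗ₜ[K] (uu K n ε a' b) :=
    toHom_u _ _ _ _ _
  have hΦ'v : Φ' (vv K n ε a' 1) = (b⁻¹ • (vv K n ε a b) ^ (n - 1)) ⊗ₜ[K] (vv K n ε a' b) :=
    toHom_v _ _ _ _ _
  -- ### commutation of the two images
  have hcomm : ∀ x y, Commute (Φ x) (Φ' y) := by
    have g11 : Commute (Φ (uu K n ε (a * a') b)) (Φ' (uu K n ε a' 1)) := by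
      rw [hΦu, hΦ'u]
      show _ = _
      rw [Algebra.TensorProduct.tmul_mul_tmul, Algebra.TensorProduct.tmul_mul_tmul,
        one_mul, mul_one]
    have g21 : Commute (Φ (vv K n ε (a * a') b)) (Φ' (uu K n ε a' 1)) := by
      rw [hΦv, hΦ'u]
      show _ = _
      rw [Algebra.TensorProduct.tmul_mul_tmul, Algebra.TensorProduct.tmul_mul_tmul,
        one_mul, mul_one, one_mul, mul_one]
    have g12 : Commute (Φ (uu K n ε (a * a') b)) (Φ' (vv K n ε a' 1)) := by
      rw [hΦu, hΦ'v]
      show _ = _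
      rw [Algebra.TensorProduct.tmul_mul_tmul, Algebra.TensorProduct.tmul_mul_tmul,
        mul_smul_comm, smul_mul_assoc, u_mul_vpow, uv_rel, smul_smul,
        TensorProduct.tmul_smul, ← TensorProduct.smul_tmul', smul_smul,
        ← TensorProduct.smul_tmul']
      congr 1
      rw [show ε * (b⁻¹ * ε ^ (n - 1)) = b⁻¹ * (ε ^ (n - 1) * ε) by ring, ← pow_succ,
        Nat.sub_add_cancel hn, hε1, mul_one]
    have g22 : Commute (Φ (vv K n ε (a * a') b)) (Φ' (vv K n ε a' 1)) := by
      rw [hΦv, hΦ'v]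
      show _ = _
      rw [Algebra.TensorProduct.tmul_mul_tmul, Algebra.TensorProduct.tmul_mul_tmul,
        one_mul, mul_one, mul_smul_comm, smul_mul_assoc, ← pow_succ, ← pow_succ']
    intro x y
    have hx1 : Commute (Φ x) (Φ' (uu K n ε a' 1)) :=
      commute_hom_range (B := SymbolAlgebra K n ε a b ⊗[K] SymbolAlgebra K n ε a' b) Φ _ g11 g21 x
    have hx2 : Commute (Φ x) (Φ' (vv K n ε a' 1)) :=
      commute_hom_range (B := SymbolAlgebra K n ε a b ⊗[K] SymbolAlgebra K n ε a' b) Φ _ g12 g22 x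
    exact (commute_hom_range (B := SymbolAlgebra K n ε a b ⊗[K] SymbolAlgebra K n ε a' b) Φ' (Φ x) hx1.symm hx2.symm y).symm
  set ψ : (SymbolAlgebra K n ε (a * a') b) ⊗[K] (SymbolAlgebra K n ε a' 1) →ₐ[K]
      SymbolAlgebra K n ε a b ⊗[K] SymbolAlgebra K n ε a' b :=
    Algebra.TensorProduct.lift Φ Φ' hcomm with hψ
  have hψbij : Function.Bijective ψ := by
    set bC : Module.Basis (Fin n × Fin n) K (SymbolAlgebra K n ε (a * a') b) :=
      symBasis hn hε1 hε0 (mul_ne_zero ha ha') with hbC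
    set bD : Module.Basis (Fin n × Fin n) K (SymbolAlgebra K n ε a' 1) :=
      symBasis hn hε1 hε0 ha' with hbD
    set bA : Module.Basis (Fin n × Fin n) K (SymbolAlgebra K n ε a b) :=
      symBasis hn hε1 hε0 ha with hbA
    set bA' : Module.Basis (Fin n × Fin n) K (SymbolAlgebra K n ε a' b) :=
      symBasis hn hε1 hε0 ha' with hbA'
    set e : ((Fin n × Fin n) × (Fin n × Fin n)) ≃ ((Fin n × Fin n) × (Fin n × Fin n)) :=
      { toFun := fun p => ((p.1.1, p.1.2 - p.2.2), (p.1.1 + p.2.1, p.2.2))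
        invFun := fun q => ((q.1.1, q.1.2 + q.2.2), (q.2.1 - q.1.1, q.2.2))
        left_inv := fun p => by obtain ⟨⟨i, j⟩, k, l⟩ := p; simp
        right_inv := fun q => by obtain ⟨⟨i, j⟩, k, l⟩ := q; simp } with he
    set scl : ((Fin n × Fin n) × (Fin n × Fin n)) → K := fun p =>
      (b⁻¹) ^ ((p.2.2 : ℕ)) * (a' ^ (((p.1.1 : ℕ) + (p.2.1 : ℕ)) / n)
        * b ^ (((p.1.2 : ℕ) + (n - 1) * (p.2.2 : ℕ)) / n)) with hscl
    have hscl0 : ∀ p, scl p ≠ 0 := fun p =>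
      mul_ne_zero (pow_ne_zero _ (inv_ne_zero hb))
        (mul_ne_zero (pow_ne_zero _ ha') (pow_ne_zero _ hb))
    have key : ∀ p, ψ (Module.Basis.tensorProduct bC bD p)
        = scl p • Module.Basis.tensorProduct bA bA' (e p) := by
      rintro ⟨⟨i, j⟩, k, l⟩
      rw [Module.Basis.tensorProduct_apply, hbC, hbD, symBasis_apply, symBasis_apply, hψ,
        Algebra.TensorProduct.lift_tmul, map_mul, map_pow, map_pow, map_mul, map_pow, map_pow,
        hΦu, hΦv, hΦ'u, hΦ'v]
      have c1 : ((uu K n ε a b ⊗ₜ[K] uu K n ε a' b) ^ (i : ℕ)) *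
            ((vv K n ε a b ⊗ₜ[K] (1 : SymbolAlgebra K n ε a' b)) ^ (j : ℕ))
          = ((uu K n ε a b) ^ (i : ℕ) * (vv K n ε a b) ^ (j : ℕ)) ⊗ₜ[K]
              ((uu K n ε a' b) ^ (i : ℕ)) := by
        rw [Algebra.TensorProduct.tmul_pow, Algebra.TensorProduct.tmul_pow, one_pow,
          Algebra.TensorProduct.tmul_mul_tmul, mul_one]
      have c2 : (((1 : SymbolAlgebra K n ε a b) ⊗ₜ[K] uu K n ε a' b) ^ (k : ℕ)) *
            (((b⁻¹ • (vv K n ε a b) ^ (n - 1)) ⊗ₜ[K] vv K n ε a' b) ^ (l : ℕ))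
          = ((b⁻¹) ^ (l : ℕ)) • (((vv K n ε a b) ^ ((n - 1) * (l : ℕ))) ⊗ₜ[K]
              ((uu K n ε a' b) ^ (k : ℕ) * (vv K n ε a' b) ^ (l : ℕ))) := by
        rw [Algebra.TensorProduct.tmul_pow, Algebra.TensorProduct.tmul_pow, one_pow, smul_pow,
          ← pow_mul, Algebra.TensorProduct.tmul_mul_tmul, one_mul, ← TensorProduct.smul_tmul']
      rw [c1, c2, mul_smul_comm, Algebra.TensorProduct.tmul_mul_tmul,
        mul_assoc ((uu K n ε a b) ^ (i : ℕ)), ← pow_add,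
        ← mul_assoc ((uu K n ε a' b) ^ (i : ℕ)), ← pow_add,
        vpow_reduce ((j : ℕ) + (n - 1) * (l : ℕ)), upow_reduce ((i : ℕ) + (k : ℕ)),
        mul_smul_comm, smul_mul_assoc, TensorProduct.tmul_smul, ← TensorProduct.smul_tmul',
        smul_smul, smul_smul]
      have hep : e ((i, j), (k, l)) = ((i, j - l), (i + k, l)) := by rw [he]; rfl
      rw [hep, Module.Basis.tensorProduct_apply, hbA, hbA', symBasis_apply, symBasis_apply]
      show _ = scl ((i, j), (k, l)) •
        (((uu K n ε a b) ^ ((i : ℕ)) * (vv K n ε a b) ^ (((j - l : Fin n) : ℕ))) ⊗ₜ[K]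
          ((uu K n ε a' b) ^ (((i + k : Fin n) : ℕ)) * (vv K n ε a' b) ^ ((l : ℕ))))
      rw [fin_sub_val, Fin.val_add, hscl]
      congr 1
      ring
    set w : ((Fin n × Fin n) × (Fin n × Fin n)) → Kˣ :=
      fun p => Units.mk0 (scl p) (hscl0 p) with hw
    set B2' : Module.Basis ((Fin n × Fin n) × (Fin n × Fin n)) K
        (SymbolAlgebra K n ε a b ⊗[K] SymbolAlgebra K n ε a' b) :=
      ((Module.Basis.tensorProduct bA bA').reindex e.symm).unitsSMul w with hB2'
    have hlin : ψ.toLinearMap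
        = ((Module.Basis.tensorProduct bC bD).equiv B2' (Equiv.refl _)).toLinearMap := by
      apply (Module.Basis.tensorProduct bC bD).ext
      intro p
      rw [AlgHom.toLinearMap_apply, key p, LinearEquiv.coe_coe, Module.Basis.equiv_apply,
        Equiv.refl_apply, hB2', Module.Basis.unitsSMul_apply, Module.Basis.reindex_apply, Equiv.symm_symm,
        hw, Units.smul_def, Units.val_mk0]
    have hco : ⇑ψ = ⇑((Module.Basis.tensorProduct bC bD).equiv B2' (Equiv.refl _)) := by
      have h2 := congrArg (fun f : _ →ₗ[K] _ => (f : _ → _)) hlin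
      simpa using h2
    rw [hco]
    exact LinearEquiv.bijective _
  -- ### the split algebra (a',1) is End K (Fin n → K)
  have h1K : (1 : K) ^ n = algebraMap K K 1 := by rw [one_pow, map_one]
  set ρD : SymbolAlgebra K n ε a' 1 →ₐ[K] Module.End K (Fin n → K) :=
    toHom (Uop n K a') (Vop n K ε 1) (Uop_pow_n a') (Vop_pow_n hε1 1 h1K)
      (Uop_Vop_rel hε1 a' 1) with hρD
  have hρDu : ρD (uu K n ε a' 1) = Uop n K a' := toHom_u _ _ _ _ _
  have hρDv : ρD (vv K n ε a' 1) = Vop n K ε 1 := toHom_v _ _ _ _ _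
  have hρDbij : Function.Bijective ρD := by
    set bD : Module.Basis (Fin n × Fin n) K (SymbolAlgebra K n ε a' 1) :=
      symBasis hn hε1 hε0 ha' with hbD
    have hρbD : ∀ p : Fin n × Fin n,
        ρD (bD p) = (Uop n K a') ^ ((p.1 : ℕ)) * (Vop n K ε 1) ^ ((p.2 : ℕ)) := by
      intro p
      rw [hbD, symBasis_apply, map_mul, map_pow, map_pow, hρDu, hρDv]
    have hinj : Function.Injective ρD := by
      rw [injective_iff_map_eq_zero]
      intro x hx
      set g : Fin n × Fin n → K := fun p => bD.repr x p with hg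
      have h0 : ∑ p : Fin n × Fin n, g p • ρD (bD p) = 0 := by
        have hsum : ∑ p : Fin n × Fin n, g p • ρD (bD p)
            = ρD (∑ p : Fin n × Fin n, g p • bD p) := by
          rw [map_sum]
          exact Finset.sum_congr rfl (fun p _ => (map_smul ρD (g p) (bD p)).symm)
        rw [hsum, hg]
        rw [Module.Basis.sum_repr bD x]
        exact hx
      have h2 : ∀ (k l : ℕ) (p q : Fin n),
          (((Uop n K a') ^ k * (Vop n K ε 1) ^ l) (Pi.single p (1 : K))) q
            = (∏ t ∈ Finset.range k, (if Fin.val (q + (t : Fin n)) + 1 = n then a' else 1)) *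
              (if q + (k : Fin n) = p then ε ^ ((p : ℕ) * l) else 0) := by
        intro k l p q
        rw [Module.End.mul_apply]
        have hV : ((Vop n K ε 1) ^ l) (Pi.single p (1 : K)) = Pi.single p (ε ^ ((p : ℕ) * l)) := by
          funext i'
          rw [Vop_pow_apply]
          by_cases h : i' = p
          · subst h; simp
          · simp [Pi.single_eq_of_ne h]
        rw [hV, Uop_pow_apply, Pi.single_apply, smul_eq_mul, mul_ite, mul_zero]
      have h3 : ∀ (kk q : Fin n),
          (∑ ll : Fin n, g (kk, ll) * ε ^ ((Fin.val (q + kk)) * (ll : ℕ))) = 0 := by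
        intro kk q
        have hWne : (∏ t ∈ Finset.range ((kk : ℕ)),
            (if Fin.val (q + (t : Fin n)) + 1 = n then a' else 1)) ≠ 0 := by
          rw [Finset.prod_ne_zero_iff]
          intro t _
          split
          · exact ha'
          · exact one_ne_zero
        have happ := congrArg
          (fun T : Module.End K (Fin n → K) => (T (Pi.single (q + kk) (1 : K))) q) h0
        simp only [LinearMap.sum_apply, LinearMap.smul_apply, Finset.sum_apply, Pi.smul_apply,
          LinearMap.zero_apply, Pi.zero_apply, smul_eq_mul, hρbD, h2,
          Fin.cast_val_eq_self, add_right_inj] at happ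
        rw [Fintype.sum_prod_type] at happ
        simp only [mul_ite, mul_zero, Finset.sum_ite_irrel, Finset.sum_const_zero,
          Finset.sum_ite_eq', Finset.mem_univ, if_true] at happ
        have hfac : (∏ t ∈ Finset.range ((kk : ℕ)),
              (if Fin.val (q + (t : Fin n)) + 1 = n then a' else 1)) *
            (∑ ll : Fin n, g (kk, ll) * ε ^ ((Fin.val (q + kk)) * (ll : ℕ))) = 0 := by
          rw [Finset.mul_sum, ← happ]
          exact Finset.sum_congr rfl (fun ll _ => by ring)
        exact (mul_eq_zero.mp hfac).resolve_left hWne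
      have h4 : ∀ kk : Fin n,
          (Matrix.vandermonde (fun q : Fin n => ε ^ (q : ℕ))).mulVec
            (fun ll => g (kk, ll)) = 0 := by
        intro kk
        funext p
        have hp := h3 kk (p - kk)
        rw [sub_add_cancel] at hp
        show ∑ ll : Fin n, Matrix.vandermonde (fun q : Fin n => ε ^ (q : ℕ)) p ll
            * g (kk, ll) = 0
        rw [← hp]
        refine Finset.sum_congr rfl (fun ll _ => ?_)
        rw [Matrix.vandermonde]
        show (ε ^ ((p : ℕ))) ^ ((ll : ℕ)) * g (kk, ll) = _
        rw [← pow_mul]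
        ring
      have hdet : (Matrix.vandermonde (fun q : Fin n => ε ^ (q : ℕ))).det ≠ 0 := by
        rw [Matrix.det_vandermonde, Finset.prod_ne_zero_iff]
        intro i _
        rw [Finset.prod_ne_zero_iff]
        intro j hj
        have hlt := Finset.mem_Ioi.mp hj
        exact sub_ne_zero_of_ne (fun hEq => hlt.ne' (Fin.ext (hε.pow_inj j.isLt i.isLt hEq)))
      have hmvinj : Function.Injective
          (Matrix.vandermonde (fun q : Fin n => ε ^ (q : ℕ))).mulVec :=
        Matrix.mulVec_injective_iff_isUnit.mpr
          ((Matrix.isUnit_iff_isUnit_det _).mpr (isUnit_iff_ne_zero.mpr hdet))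
      have h5 : ∀ kk : Fin n, (fun ll => g (kk, ll)) = (0 : Fin n → K) := by
        intro kk
        apply hmvinj
        rw [Matrix.mulVec_zero, h4]
      have hgz : ∀ p : Fin n × Fin n, bD.repr x p = 0 := by
        intro p
        have := congrFun (h5 p.1) p.2
        simpa [hg] using this
      have hxz : x = 0 := by
        rw [← Module.Basis.sum_repr bD x]
        simp [hgz]
      exact hxz
    haveI hfd : FiniteDimensional K (SymbolAlgebra K n ε a' 1) :=
      Module.Finite.of_basis bD
    have hfr : Module.finrank K (SymbolAlgebra K n ε a' 1)
        = Module.finrank K (Module.End K (Fin n → K)) := by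
      rw [Module.finrank_eq_card_basis bD,
        (algEquivMatrix' (R := K) (n := Fin n)).toLinearEquiv.finrank_eq,
        Module.finrank_matrix]
      simp
    exact ⟨hinj,
      (LinearMap.injective_iff_surjective_of_finrank_eq_finrank
        (f := ρD.toLinearMap) hfr).mp hinj⟩
  -- ### assembly
  refine ⟨1, n, one_pos, hn, ⟨?_⟩⟩
  have isoD : SymbolAlgebra K n ε a' 1 ≃ₐ[K] Matrix (Fin n) (Fin n) K :=
    (AlgEquiv.ofBijective ρD hρDbij).trans algEquivMatrix'
  have iso2 : Matrix (Fin n) (Fin n) (SymbolAlgebra K n ε (a * a') b) ≃ₐ[K]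
      (SymbolAlgebra K n ε a b ⊗[K] SymbolAlgebra K n ε a' b) :=
    (matrixEquivTensor (Fin n) K (SymbolAlgebra K n ε (a * a') b)).trans
      ((Algebra.TensorProduct.congr AlgEquiv.refl isoD.symm).trans
        (AlgEquiv.ofBijective ψ hψbij))
  exact (matrixOneEquiv (K := K) (SymbolAlgebra K n ε a b ⊗[K] SymbolAlgebra K n ε a' b)).trans iso2.symm

end Stmt7


open scoped TensorProduct in
/-- `(a,b;K,ε) ⊗_K (a',b;K,ε)` is Brauer equivalent to `(a·a',b;K,ε)`:
some matrix algebras over them are isomorphic. -/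
theorem stmt7 (K : Type) [Field K] (n : ℕ) (hn : 0 < n) (ε : K)
    (hε : IsPrimitiveRoot ε n) (a a' b : K) (ha : a ≠ 0) (ha' : a' ≠ 0) (hb : b ≠ 0) :
    ∃ r s : ℕ, 0 < r ∧ 0 < s ∧
      Nonempty ((Matrix (Fin r) (Fin r)
          (SymbolAlgebra K n ε a b ⊗[K] SymbolAlgebra K n ε a' b))
        ≃ₐ[K] Matrix (Fin s) (Fin s) (SymbolAlgebra K n ε (a * a') b)) := by
  exact Stmt7.stmt7_aux K n hn ε hε a a' b ha ha' hb
end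

section
/- Let q ≡ 1 (mod n), ε ∈ 𝔽_q a primitive n-th root of unity, f a monic irreducible in 𝔽_q[t], and F = 𝔽_q(t)_(f) the f-adic completion. If a, a' are units of the valuation ring of F with a ≡ a' (mod f), then for any b ∈ F* the symbol algebras (a,b;F,ε) and (a',b;F,ε) are Brauer equivalent. -/
set_option synthInstance.maxHeartbeats 1000000
set_option maxHeartbeats 1000000

open scoped TensorProduct

open Polynomial in
lemma binom_step {K : Type} [Field K] [vK : Valued K (WithZero (Multiplicative ℤ))]
    (n : ℕ) (c h u : K) (hc : Valued.v c ≤ 1) (hh : Valued.v h ≤ 1) (hu : Valued.v u ≤ 1) :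
    ∃ k : K, Valued.v k ≤ 1 ∧
      (c - h) ^ n - u = (c ^ n - u) - (n : K) * c ^ (n - 1) * h + k * h ^ 2 := by
  set O := (Valued.v : Valuation K (WithZero (Multiplicative ℤ))).integer with hO
  let C : O := ⟨c, hc⟩
  let H : O := ⟨h, hh⟩
  let U : O := ⟨u, hu⟩
  let f : O[X] := X ^ n - Polynomial.C U
  obtain ⟨k, hk⟩ := f.binomExpansion C (-H)
  refine ⟨k, k.2, ?_⟩
  have hder : f.derivative = Polynomial.C (n : O) * X ^ (n - 1) := by
    simp [f, derivative_X_pow]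
  have h1 : f.eval (C + -H) = (C - H) ^ n - U := by simp [f, sub_eq_add_neg]
  have h2 : f.eval C = C ^ n - U := by simp [f]
  rw [h1, h2, hder] at hk
  simp only [eval_mul, eval_C, eval_pow, eval_X] at hk
  have := congrArg (Subtype.val : O → K) hk
  push_cast at this
  rw [this]; ring

lemma exists_pow_lt_zm0 {δ : WithZero (Multiplicative ℤ)} (hδ : δ < 1)
    (γ : WithZero (Multiplicative ℤ)) (hγ : 0 < γ) : ∃ N : ℕ, ∀ k ≥ N, δ ^ (k + 1) < γ := by
  rcases eq_or_ne δ 0 with h0 | h0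
  · exact ⟨0, fun k _ => by simp [h0, zero_pow, hγ]⟩
  obtain ⟨d, rfl⟩ := WithZero.ne_zero_iff_exists.mp h0
  obtain ⟨g, rfl⟩ := WithZero.ne_zero_iff_exists.mp hγ.ne'
  refine ⟨(Multiplicative.toAdd g).natAbs, fun k hk => ?_⟩
  rw [← WithZero.coe_pow, WithZero.coe_lt_coe]
  rw [WithZero.coe_lt_one, ← Multiplicative.toAdd_lt, toAdd_one] at hδ
  rw [← Multiplicative.toAdd_lt, toAdd_pow]
  have h1 : Multiplicative.toAdd d ≤ -1 := by omega
  have h2 : -(Multiplicative.toAdd g).natAbs ≤ Multiplicative.toAdd g := by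
    rcases Int.natAbs_eq (Multiplicative.toAdd g) with h | h <;> omega
  calc (k + 1 : ℕ) • Multiplicative.toAdd d ≤ (k+1 : ℕ) • (-1 : ℤ) :=
        nsmul_le_nsmul_right h1 _
    _ < Multiplicative.toAdd g := by
        simp only [nsmul_eq_mul]
        have : ((Multiplicative.toAdd g).natAbs : ℤ) ≤ k := by exact_mod_cast hk
        omega

noncomputable def newtonSeq {K : Type} [Field K] (n : ℕ) (u : K) : ℕ → K
  | 0 => 1
  | k + 1 => newtonSeq n u k - (newtonSeq n u k ^ n - u) / ((n : K) * newtonSeq n u k ^ (n - 1))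

lemma hensel_pow {K : Type} [Field K] [vK : Valued K (WithZero (Multiplicative ℤ))]
    [CompleteSpace K] [T2Space K]
    (n : ℕ) (hn : Valued.v ((n : K)) = 1)
    (u : K) (hu : Valued.v u = 1) (hu1 : Valued.v (u - 1) < 1) :
    ∃ c : K, c ^ n = u := by
  set δ := Valued.v (u - 1) with hδdef
  have hδ1 : δ < 1 := hu1
  have hδle : δ ≤ 1 := hδ1.le
  have inv : ∀ k, Valued.v (newtonSeq n u k) = 1 ∧
      Valued.v (newtonSeq n u k ^ n - u) ≤ δ ^ (k + 1) := by
    intro k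
    induction k with
    | zero =>
      refine ⟨by simp [newtonSeq], ?_⟩
      rw [show newtonSeq n u 0 ^ n - u = -(u - 1) by simp [newtonSeq], Valuation.map_neg, pow_one]
    | succ k ih =>
      obtain ⟨hc1, he⟩ := ih
      set c := newtonSeq n u k with hcdef
      set e := c ^ n - u with hedef
      have hδk1 : δ ^ (k + 1) ≤ δ := by
        calc δ ^ (k + 1) ≤ δ ^ 1 := pow_le_pow_right_of_le_one' hδle (by omega)
          _ = δ := pow_one δ
      have hd : Valued.v ((n : K) * c ^ (n - 1)) = 1 := by
        rw [Valuation.map_mul, hn, Valuation.map_pow, hc1, one_pow, one_mul]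
      have hd0 : (n : K) * c ^ (n - 1) ≠ 0 := by
        intro h; rw [h] at hd; simp at hd
      set h := e / ((n : K) * c ^ (n - 1)) with hhdef
      have hvh : Valued.v h = Valued.v e := by
        rw [hhdef, map_div₀, hd, div_one]
      have hvhle : Valued.v h ≤ δ ^ (k + 1) := hvh.le.trans he
      have hvh1 : Valued.v h < 1 := lt_of_le_of_lt (hvhle.trans hδk1) hδ1
      obtain ⟨k₀, hk₀, heq⟩ := binom_step n c h u hc1.le hvh1.le hu.le
      have hdh : (n : K) * c ^ (n - 1) * h = e := by
        rw [hhdef, mul_div_cancel₀ _ hd0]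
      have hseq : newtonSeq n u (k + 1) = c - h := by
        rw [newtonSeq]
      have hkey : newtonSeq n u (k + 1) ^ n - u = k₀ * h ^ 2 := by
        rw [hseq, heq, hdh, ← hedef]; ring
      constructor
      · rw [hseq, Valuation.map_sub_eq_of_lt_left _ (by rw [hc1]; exact hvh1), hc1]
      · rw [hkey, Valuation.map_mul, Valuation.map_pow]
        calc Valued.v k₀ * Valued.v h ^ 2 ≤ 1 * (δ ^ (k + 1)) ^ 2 := by
              exact mul_le_mul' hk₀ (pow_le_pow_left' hvhle 2)
          _ = δ ^ (2 * (k + 1)) := by rw [one_mul, ← pow_mul, mul_comm]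
          _ ≤ δ ^ (k + 1 + 1) := pow_le_pow_right_of_le_one' hδle (by omega)
  have hstep : ∀ l, Valued.v (newtonSeq n u (l + 1) - newtonSeq n u l) ≤ δ ^ (l + 1) := by
    intro l
    obtain ⟨hc1, he⟩ := inv l
    have hd : Valued.v ((n : K) * newtonSeq n u l ^ (n - 1)) = 1 := by
      rw [Valuation.map_mul, hn, Valuation.map_pow, hc1, one_pow, one_mul]
    rw [newtonSeq, sub_sub_cancel_left, Valuation.map_neg, map_div₀, hd, div_one]
    exact he
  have htel : ∀ m l, m ≤ l → Valued.v (newtonSeq n u l - newtonSeq n u m) ≤ δ ^ (m + 1) := by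
    intro m l hml
    induction l, hml using Nat.le_induction with
    | base => simp
    | succ l hml ih =>
      have : newtonSeq n u (l + 1) - newtonSeq n u m =
          (newtonSeq n u (l + 1) - newtonSeq n u l) + (newtonSeq n u l - newtonSeq n u m) := by
        ring
      rw [this]
      refine le_trans (Valued.v.map_add _ _) (max_le ?_ ih)
      exact (hstep l).trans (pow_le_pow_right_of_le_one' hδle (by omega))
  have hcauchy : CauchySeq (newtonSeq n u) := by
    rw [(Valued.hasBasis_uniformity K _).cauchySeq_iff]
    rintro γ -
    obtain ⟨N, hN⟩ := exists_pow_lt_zm0 hδ1 (MonoidWithZeroHom.ValueGroup₀.embedding γ.1) (by simpa using MonoidWithZeroHom.ValueGroup₀.embedding_strictMono γ.zero_lt)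
    refine ⟨N, fun m hm l hl => ?_⟩
    show Valued.v.restrict (newtonSeq n u l - newtonSeq n u m) < γ.1
    rw [Valuation.restrict_lt_iff_lt_embedding]
    rcases le_total m l with hml | hlm
    · exact lt_of_le_of_lt ((htel m l hml).trans
        (pow_le_pow_right_of_le_one' hδle (by omega))) (hN N le_rfl)
    · show Valued.v (newtonSeq n u l - newtonSeq n u m) < MonoidWithZeroHom.ValueGroup₀.embedding γ.1
      rw [Valuation.map_sub_swap]
      exact lt_of_le_of_lt ((htel l m hlm).trans
        (pow_le_pow_right_of_le_one' hδle (by omega))) (hN N le_rfl)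
  obtain ⟨c, hc⟩ := cauchySeq_tendsto_of_complete hcauchy
  refine ⟨c, ?_⟩
  have h1 : Filter.Tendsto (fun k => newtonSeq n u k ^ n) Filter.atTop (nhds (c ^ n)) := hc.pow n
  have h2 : Filter.Tendsto (fun k => newtonSeq n u k ^ n) Filter.atTop (nhds u) := by
    intro s hs
    obtain ⟨γ, hγ⟩ := Valued.mem_nhds.mp hs
    obtain ⟨N, hN⟩ := exists_pow_lt_zm0 hδ1 (MonoidWithZeroHom.ValueGroup₀.embedding γ.1) (by simpa using MonoidWithZeroHom.ValueGroup₀.embedding_strictMono γ.zero_lt)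
    rw [Filter.mem_map]
    exact Filter.mem_of_superset (Filter.mem_atTop N)
      (fun k hk => hγ ((Valuation.restrict_lt_iff_lt_embedding Valued.v).mpr (lt_of_le_of_lt (inv k).2 (hN k hk))))
  exact tendsto_nhds_unique h1 h2

namespace SymbolAlgebra

variable {K : Type} [Field K] (n : ℕ) (ε a b : K)

noncomputable def mk : FreeAlgebra K (Fin 2) →ₐ[K] SymbolAlgebra K n ε a b :=
  RingQuot.mkAlgHom K (SymbolRel K n ε a b)

noncomputable def U : SymbolAlgebra K n ε a b := mk n ε a b (FreeAlgebra.ι K 0)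
noncomputable def V : SymbolAlgebra K n ε a b := mk n ε a b (FreeAlgebra.ι K 1)

theorem U_pow : (U n ε a b) ^ n = algebraMap K _ a := by
  have hrel : SymbolRel K n ε a b ((FreeAlgebra.ι K (0 : Fin 2)) ^ n)
      (algebraMap K _ a) := Or.inl ⟨rfl, rfl⟩
  have := RingQuot.mkAlgHom_rel K hrel
  rw [map_pow, AlgHom.commutes] at this
  exact this

theorem V_pow : (V n ε a b) ^ n = algebraMap K _ b := by
  have hrel : SymbolRel K n ε a b ((FreeAlgebra.ι K (1 : Fin 2)) ^ n)
      (algebraMap K _ b) := Or.inr (Or.inl ⟨rfl, rfl⟩)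
  have := RingQuot.mkAlgHom_rel K hrel
  rw [map_pow, AlgHom.commutes] at this
  exact this

theorem UV : (U n ε a b) * (V n ε a b) = algebraMap K _ ε * ((V n ε a b) * (U n ε a b)) := by
  have hrel : SymbolRel K n ε a b (FreeAlgebra.ι K (0 : Fin 2) * FreeAlgebra.ι K (1 : Fin 2))
      (algebraMap K _ ε * (FreeAlgebra.ι K (1 : Fin 2) * FreeAlgebra.ι K (0 : Fin 2))) :=
    Or.inr (Or.inr ⟨rfl, rfl⟩)
  have := RingQuot.mkAlgHom_rel K hrel
  simp only [map_mul, AlgHom.commutes] at this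
  exact this

/-- the hom sending u ↦ c·u', v ↦ v' -/
noncomputable def homAux (a' c : K) (hca : a = c ^ n * a') :
    SymbolAlgebra K n ε a b →ₐ[K] SymbolAlgebra K n ε a' b :=
  RingQuot.liftAlgHom K ⟨FreeAlgebra.lift K
    (fun i => if i = 0 then algebraMap K (SymbolAlgebra K n ε a' b) c * U n ε a' b
      else V n ε a' b), by
    rintro p q (⟨rfl, rfl⟩ | ⟨rfl, rfl⟩ | ⟨rfl, rfl⟩) <;>
      simp only [map_pow, map_mul, AlgHom.commutes, FreeAlgebra.lift_ι_apply, if_pos,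
        if_neg (by decide : (1 : Fin 2) ≠ 0)]
    · rw [(Algebra.commute_algebraMap_left c (U n ε a' b)).mul_pow, U_pow, ← map_pow,
        ← map_mul, ← hca]
    · exact V_pow n ε a' b
    · set A := SymbolAlgebra K n ε a' b
      set Cc := algebraMap K A c
      set Cε := algebraMap K A ε
      set V' := V n ε a' b
      set U' := U n ε a' b
      calc Cc * U' * V' = Cc * (U' * V') := by rw [mul_assoc]
        _ = Cc * (Cε * (V' * U')) := by rw [UV]
        _ = (Cc * Cε) * (V' * U') := by rw [mul_assoc]
        _ = (Cε * Cc) * (V' * U') := by rw [← map_mul, mul_comm c ε, map_mul]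
        _ = Cε * ((Cc * V') * U') := by rw [mul_assoc, ← mul_assoc Cc V' U']
        _ = Cε * ((V' * Cc) * U') := by rw [Algebra.commutes c V']
        _ = Cε * (V' * (Cc * U')) := by rw [mul_assoc]⟩

end SymbolAlgebra

namespace SymbolAlgebra
variable {K : Type} [Field K] (n : ℕ) (ε a b : K)

theorem homAux_U (a' c : K) (hca : a = c ^ n * a') :
    homAux n ε a b a' c hca (U n ε a b) =
      algebraMap K (SymbolAlgebra K n ε a' b) c * U n ε a' b := by
  unfold homAux U mk
  exact (RingQuot.liftAlgHom_mkAlgHom_apply _ _ _ _).trans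
    (by rw [FreeAlgebra.lift_ι_apply, if_pos rfl])

theorem homAux_V (a' c : K) (hca : a = c ^ n * a') :
    homAux n ε a b a' c hca (V n ε a b) = V n ε a' b := by
  unfold homAux V mk
  exact (RingQuot.liftAlgHom_mkAlgHom_apply _ _ _ _).trans
    (by rw [FreeAlgebra.lift_ι_apply, if_neg (by decide : (1 : Fin 2) ≠ 0)])

noncomputable def equivOfPow (a' c : K) (hc : c ≠ 0) (hca : a = c ^ n * a') :
    SymbolAlgebra K n ε a b ≃ₐ[K] SymbolAlgebra K n ε a' b := by
  have hca' : a' = c⁻¹ ^ n * a := by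
    rw [hca, inv_pow, inv_mul_cancel_left₀ (pow_ne_zero _ hc)]
  refine AlgEquiv.ofAlgHom (homAux n ε a b a' c hca) (homAux n ε a' b a c⁻¹ hca') ?_ ?_
  · refine RingQuot.ringQuot_ext' K _ _ (FreeAlgebra.hom_ext (funext fun i => ?_))
    fin_cases i
    · show (homAux n ε a b a' c hca) ((homAux n ε a' b a c⁻¹ hca') (mk n ε a' b
        (FreeAlgebra.ι K 0))) = mk n ε a' b (FreeAlgebra.ι K 0)
      rw [show mk n ε a' b (FreeAlgebra.ι K (0 : Fin 2)) = U n ε a' b from rfl,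
        homAux_U, map_mul, AlgHom.commutes, homAux_U, ← mul_assoc, ← map_mul,
        inv_mul_cancel₀ hc, map_one, one_mul]
    · show (homAux n ε a b a' c hca) ((homAux n ε a' b a c⁻¹ hca') (mk n ε a' b
        (FreeAlgebra.ι K 1))) = mk n ε a' b (FreeAlgebra.ι K 1)
      rw [show mk n ε a' b (FreeAlgebra.ι K (1 : Fin 2)) = V n ε a' b from rfl,
        homAux_V, homAux_V]
  · refine RingQuot.ringQuot_ext' K _ _ (FreeAlgebra.hom_ext (funext fun i => ?_))
    fin_cases i
    · show (homAux n ε a' b a c⁻¹ hca') ((homAux n ε a b a' c hca) (mk n ε a b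
        (FreeAlgebra.ι K 0))) = mk n ε a b (FreeAlgebra.ι K 0)
      rw [show mk n ε a b (FreeAlgebra.ι K (0 : Fin 2)) = U n ε a b from rfl,
        homAux_U, map_mul, AlgHom.commutes, homAux_U, ← mul_assoc, ← map_mul,
        mul_inv_cancel₀ hc, map_one, one_mul]
    · show (homAux n ε a' b a c⁻¹ hca') ((homAux n ε a b a' c hca) (mk n ε a b
        (FreeAlgebra.ι K 1))) = mk n ε a b (FreeAlgebra.ι K 1)
      rw [show mk n ε a b (FreeAlgebra.ι K (1 : Fin 2)) = V n ε a b from rfl,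
        homAux_V, homAux_V]

end SymbolAlgebra


open IsDedekindDomain Polynomial in
/-- over `F = 𝔽_q(t)_(f)` with `q ≡ 1 (mod n)`, if `a, a'` are units of the
valuation ring with `a ≡ a' (mod f)`, then for any `b ∈ F*` the symbol algebras `(a,b;F,ε)`
and `(a',b;F,ε)` are Brauer equivalent. -/
theorem stmt9 (Fq : Type) [Field Fq] [Fintype Fq] (n : ℕ) (hn : 0 < n)
    (hqn : Fintype.card Fq % n = 1 % n)
    (ε : Fq) (hε : IsPrimitiveRoot ε n)
    (f : Polynomial Fq) (hf : f.Monic) (hirr : Irreducible f)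
    (v : HeightOneSpectrum (Polynomial Fq)) (hv : v.asIdeal = Ideal.span {f})
    (a a' : v.adicCompletion (RatFunc Fq))
    (haunit : Valued.v a = (1 : WithZero (Multiplicative ℤ)))
    (ha'unit : Valued.v a' = (1 : WithZero (Multiplicative ℤ)))
    (hcong : Valued.v (a - a') < (1 : WithZero (Multiplicative ℤ)))
    (b : v.adicCompletion (RatFunc Fq)) (hb : b ≠ 0) :
    ∃ r s : ℕ, 0 < r ∧ 0 < s ∧
      Nonempty (Matrix (Fin r) (Fin r)
          (SymbolAlgebra (v.adicCompletion (RatFunc Fq)) n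
            (algebraMap (RatFunc Fq) (v.adicCompletion (RatFunc Fq)) (RatFunc.C ε)) a b)
        ≃ₐ[v.adicCompletion (RatFunc Fq)]
          Matrix (Fin s) (Fin s)
          (SymbolAlgebra (v.adicCompletion (RatFunc Fq)) n
            (algebraMap (RatFunc Fq) (v.adicCompletion (RatFunc Fq)) (RatFunc.C ε)) a' b)) := by
  
  have ha'0 : a' ≠ 0 := by
    intro h; rw [h, map_zero] at ha'unit; exact zero_ne_one ha'unit
  have ha0 : a ≠ 0 := by
    intro h; rw [h, map_zero] at haunit; exact zero_ne_one haunit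
  -- (n : Fq) ≠ 0
  have hnFq : (n : Fq) ≠ 0 := by
    intro hn0
    have hmod : Fintype.card Fq ≡ 1 [MOD n] := hqn
    obtain ⟨k, hk⟩ := (Nat.modEq_iff_dvd).mp hmod
    have hcast := congrArg (fun z : ℤ => (z : Fq)) hk
    push_cast at hcast
    rw [FiniteField.cast_card_eq_zero, hn0] at hcast
    simp at hcast
  -- valuation of algebraMap elements
  have hval : ∀ k : RatFunc Fq,
      Valued.v (algebraMap (RatFunc Fq) (v.adicCompletion (RatFunc Fq)) k) = v.valuation (RatFunc Fq) k := by
    intro k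
    exact IsDedekindDomain.HeightOneSpectrum.valuedAdicCompletion_eq_valuation' v k
  have hn1 : Valued.v ((n : v.adicCompletion (RatFunc Fq))) = 1 := by
    rw [show ((n : v.adicCompletion (RatFunc Fq)))
        = algebraMap (RatFunc Fq) (v.adicCompletion (RatFunc Fq)) (n : RatFunc Fq) from
      (map_natCast _ n).symm, hval]
    have hle : v.valuation (RatFunc Fq) ((n : RatFunc Fq)) ≤ 1 := by
      rw [show ((n : RatFunc Fq)) = algebraMap (Polynomial Fq) (RatFunc Fq) (n : Polynomial Fq)
        from (map_natCast _ n).symm]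
      exact v.valuation_le_one _
    have hle' : v.valuation (RatFunc Fq) (algebraMap (Polynomial Fq) (RatFunc Fq)
        (Polynomial.C ((n : Fq)⁻¹))) ≤ 1 := v.valuation_le_one _
    have hprod : ((n : RatFunc Fq)) * algebraMap (Polynomial Fq) (RatFunc Fq)
        (Polynomial.C ((n : Fq)⁻¹)) = 1 := by
      rw [show ((n : RatFunc Fq)) = algebraMap (Polynomial Fq) (RatFunc Fq) (n : Polynomial Fq)
        from (map_natCast _ n).symm, ← map_mul,
        (Polynomial.C_eq_natCast n).symm,
        ← Polynomial.C_mul, mul_inv_cancel₀ hnFq, Polynomial.C_1, map_one]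
    have hmul : v.valuation (RatFunc Fq) ((n : RatFunc Fq)) * v.valuation (RatFunc Fq) (algebraMap (Polynomial Fq)
        (RatFunc Fq) (Polynomial.C ((n : Fq)⁻¹))) = 1 := by
      rw [← Valuation.map_mul, hprod, Valuation.map_one]
    refine le_antisymm hle ?_
    calc (1 : WithZero (Multiplicative ℤ)) = _ * _ := hmul.symm
      _ ≤ v.valuation (RatFunc Fq) ((n : RatFunc Fq)) * 1 := mul_le_mul_right hle' _
      _ = v.valuation (RatFunc Fq) ((n : RatFunc Fq)) := mul_one _
  have hu : Valued.v (a / a') = 1 := by rw [map_div₀, haunit, ha'unit, div_one]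
  have hu1 : Valued.v (a / a' - 1) < 1 := by
    have heq : a / a' - 1 = (a - a') / a' := by field_simp
    rw [heq, map_div₀, ha'unit, div_one]
    exact hcong
  obtain ⟨c, hc⟩ := hensel_pow n hn1 (a / a') hu hu1
  have hu0 : a / a' ≠ 0 := div_ne_zero ha0 ha'0
  have hc0 : c ≠ 0 := by
    rintro rfl
    rw [zero_pow hn.ne'] at hc
    exact hu0 hc.symm
  have hca : a = c ^ n * a' := by rw [hc]; field_simp
  exact ⟨1, 1, one_pos, one_pos,
    ⟨AlgEquiv.mapMatrix (SymbolAlgebra.equivOfPow n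
      (algebraMap (RatFunc Fq) (v.adicCompletion (RatFunc Fq)) (RatFunc.C ε)) a b a' c hc0 hca)⟩⟩
end

section
/- Let K be a field, σ an automorphism of K of order n, λ ∈ (K^σ)*, and suppose λ = N_{K/K^σ}(a) for some a ∈ K*, where N denotes the field norm. Define N_j(a) = a·σ(a)···σ^{j−1}(a) (with N₀(a)=1). Then the map θ: K[x;σ]/(xⁿ−λ) → K[y;σ]/(yⁿ−1) given by θ(Σ_{i=0}^{n−1} a_i x^i) = Σ_{i=0}^{n−1} a_i N_i(a) y^i is an isomorphism of K^σ-algebras. -/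
set_option synthInstance.maxHeartbeats 1000000
set_option maxHeartbeats 1000000

/-- The fixed subfield `K^σ` of an automorphism `σ` of a field `K`. -/
def fixedSubfield {K : Type} [Field K] (σ : K ≃+* K) : Subfield K where
  carrier := {c | σ c = c}
  one_mem' := map_one σ
  mul_mem' := by intro a b ha hb; simp only [Set.mem_setOf_eq, map_mul] at *; rw [ha, hb]
  add_mem' := by intro a b ha hb; simp only [Set.mem_setOf_eq, map_add] at *; rw [ha, hb]
  zero_mem' := map_zero σ
  neg_mem' := by intro a ha; simp only [Set.mem_setOf_eq, map_neg] at *; rw [ha]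
  inv_mem' := by intro a ha; simp only [Set.mem_setOf_eq, map_inv₀] at *; rw [ha]

namespace Stmt12Aux

variable {K R : Type} [Field K] [Ring R] {σ : K ≃+* K} {i : K →+* R} {x : R}

lemma pow_apply_comp (σ : K ≃+* K) (k j : ℕ) (c : K) :
    (σ ^ k) ((σ ^ j) c) = (σ ^ (k + j)) c := by
  rw [pow_add]; rfl

section rep

variable (hfree : ∀ z : R, ∃! c : ℕ →₀ K, z = c.sum fun k ck => i ck * x ^ k)

noncomputable def rep (z : R) : ℕ →₀ K := (hfree z).choose

lemma rep_spec (z : R) : z = (rep hfree z).sum fun k ck => i ck * x ^ k :=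
  (hfree z).choose_spec.1

lemma rep_unique {z : R} {c : ℕ →₀ K} (h : z = c.sum fun k ck => i ck * x ^ k) :
    rep hfree z = c := ((hfree z).choose_spec.2 c h).symm

lemma rep_mono (c : K) (k : ℕ) : rep hfree (i c * x ^ k) = Finsupp.single k c := by
  apply rep_unique
  rw [Finsupp.sum_single_index]
  simp

lemma rep_zero : rep hfree (0 : R) = 0 := by
  apply rep_unique; simp

lemma rep_add (z w : R) : rep hfree (z + w) = rep hfree z + rep hfree w := by
  apply rep_unique
  rw [Finsupp.sum_add_index' (by simp) (by intro k b1 b2; rw [map_add, add_mul])]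
  rw [← rep_spec hfree z, ← rep_spec hfree w]

end rep

lemma xpow_comm (hcomm : ∀ c : K, x * i c = i (σ c) * x) (k : ℕ) (c : K) :
    x ^ k * i c = i ((σ ^ k) c) * x ^ k := by
  induction k with
  | zero => simp
  | succ k ih =>
      rw [pow_succ', mul_assoc, ih, ← mul_assoc, hcomm, mul_assoc, ← pow_succ',
        show σ ((σ ^ k) c) = (σ ^ (k+1)) c by rw [add_comm]; exact pow_apply_comp σ 1 k c]

lemma mono_mul (hcomm : ∀ c : K, x * i c = i (σ c) * x) (b c : K) (k m : ℕ) :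
    (i b * x ^ k) * (i c * x ^ m) = i (b * (σ ^ k) c) * x ^ (k + m) := by
  rw [mul_assoc, ← mul_assoc (x ^ k), xpow_comm hcomm, mul_assoc, ← pow_add,
    ← mul_assoc, ← map_mul]

section phi

variable (hcomm : ∀ c : K, x * i c = i (σ c) * x)
variable (hfree : ∀ z : R, ∃! c : ℕ →₀ K, z = c.sum fun k ck => i ck * x ^ k)
include hcomm hfree in

noncomputable def phiF (t : ℕ → K) (z : R) : R :=
  (rep hfree z).sum fun k ck => i (ck * t k) * x ^ k

lemma phiF_zero (t : ℕ → K) : phiF hfree t (0 : R) = 0 := by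
  unfold phiF; rw [rep_zero]; simp

lemma phiF_add (t : ℕ → K) (z w : R) :
    phiF hfree t (z + w) = phiF hfree t z + phiF hfree t w := by
  unfold phiF
  rw [rep_add hfree]
  exact Finsupp.sum_add_index' (by simp) (by intro k b1 b2; rw [add_mul, map_add, add_mul])

noncomputable def phiAdd (t : ℕ → K) : R →+ R where
  toFun := phiF hfree t
  map_zero' := phiF_zero hfree t
  map_add' := phiF_add hfree t

lemma phiF_mono (t : ℕ → K) (c : K) (k : ℕ) :
    phiF hfree t (i c * x ^ k) = i (c * t k) * x ^ k := by
  unfold phiF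
  rw [rep_mono hfree, Finsupp.sum_single_index (by simp)]

lemma phiF_one (t : ℕ → K) (ht0 : t 0 = 1) : phiF hfree t (1 : R) = 1 := by
  have h : (1 : R) = i 1 * x ^ 0 := by simp
  rw [h, phiF_mono hfree, ht0]; simp

include hcomm in
lemma mul_expand (z w : R) :
    z * w = (rep hfree z).sum fun k ck => (rep hfree w).sum fun m dm =>
      i (ck * (σ ^ k) dm) * x ^ (k + m) := by
  conv_lhs => rw [rep_spec hfree z, rep_spec hfree w]
  rw [Finsupp.sum_mul]
  refine Finset.sum_congr rfl fun k _ => ?_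
  dsimp only
  rw [Finsupp.mul_sum]
  exact Finset.sum_congr rfl fun m _ => mono_mul hcomm _ _ _ _

include hcomm in
lemma phiF_mul (t : ℕ → K) (ht : ∀ k m, t (k + m) = t k * (σ ^ k) (t m)) (z w : R) :
    phiF hfree t (z * w) = phiF hfree t z * phiF hfree t w := by
  have hsum : ∀ (s : ℕ →₀ K) (g : ℕ → K → R),
      phiF hfree t (s.sum g) = s.sum fun k ck => phiF hfree t (g k ck) :=
    fun s g => map_finsuppSum (phiAdd hfree t) s g
  rw [mul_expand hcomm hfree z w, hsum]
  have lhs_eq : ((rep hfree z).sum fun k ck =>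
      phiF hfree t ((rep hfree w).sum fun m dm => i (ck * (σ ^ k) dm) * x ^ (k + m)))
      = (rep hfree z).sum fun k ck => (rep hfree w).sum fun m dm =>
          i (ck * (σ ^ k) dm * t (k + m)) * x ^ (k + m) := by
    refine Finsupp.sum_congr fun k _ => ?_
    rw [hsum]
    exact Finsupp.sum_congr fun m _ => phiF_mono hfree t _ _
  rw [lhs_eq]
  show _ = ((rep hfree z).sum fun k ck => i (ck * t k) * x ^ k) *
      ((rep hfree w).sum fun m dm => i (dm * t m) * x ^ m)
  rw [Finsupp.sum_mul]
  refine Finset.sum_congr rfl fun k _ => ?_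
  dsimp only
  rw [Finsupp.mul_sum]
  refine Finset.sum_congr rfl fun m _ => ?_
  dsimp only
  rw [mono_mul hcomm]
  congr 1
  rw [ht]
  congr 1
  rw [map_mul]
  ring

include hcomm in
noncomputable def phi (t : ℕ → K) (ht0 : t 0 = 1)
    (ht : ∀ k m, t (k + m) = t k * (σ ^ k) (t m)) : R →+* R :=
  { phiAdd hfree t with
    map_one' := phiF_one hfree t ht0
    map_mul' := phiF_mul hcomm hfree t ht }

include hcomm in
lemma phi_apply (t : ℕ → K) (ht0) (ht) (z : R) :
    phi hcomm hfree t ht0 ht z = phiF hfree t z := rfl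

include hcomm in
lemma phi_mono (t : ℕ → K) (ht0) (ht) (c : K) (k : ℕ) :
    phi hcomm hfree t ht0 ht (i c * x ^ k) = i (c * t k) * x ^ k :=
  phiF_mono hfree t c k

include hcomm in
lemma phi_phi (t t' : ℕ → K) (ht0) (ht) (ht0') (ht')
    (h : ∀ k, t k * t' k = 1) (z : R) :
    phi hcomm hfree t' ht0' ht' (phi hcomm hfree t ht0 ht z) = z := by
  rw [phi_apply]
  show phiF hfree t' ((rep hfree z).sum fun k ck => i (ck * t k) * x ^ k) = z
  have hsum : ∀ (s : ℕ →₀ K) (g : ℕ → K → R),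
      phiF hfree t' (s.sum g) = s.sum fun k ck => phiF hfree t' (g k ck) :=
    fun s g => map_finsuppSum (phiAdd hfree t') s g
  rw [hsum]
  have : ((rep hfree z).sum fun k ck => phiF hfree t' (i (ck * t k) * x ^ k))
      = (rep hfree z).sum fun k ck => i ck * x ^ k := by
    refine Finsupp.sum_congr fun k _ => ?_
    rw [phiF_mono hfree, mul_assoc, h, mul_one]
  rw [this]
  exact (rep_spec hfree z).symm

end phi

end Stmt12Aux

/-- if `λ = N_{K/K^σ}(a)`, then `θ(Σ aᵢ xⁱ) = Σ aᵢ·Nᵢ(a)·yⁱ`, where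
`Nᵢ(a) = a·σ(a)···σ^{i−1}(a)`, defines an isomorphism of `K^σ`-algebras
`K[x;σ]/(xⁿ−λ) ≅ K[y;σ]/(yⁿ−1)` (both realized as quotients of the skew polynomial ring
`R = K[x;σ]`, axiomatized as in the paper). -/
theorem stmt12 (K : Type) [Field K] (σ : K ≃+* K) (n : ℕ) (hn : 0 < n)
    (hord : orderOf σ = n) (a lam : K) (ha : a ≠ 0)
    (hnorm : ∏ j ∈ Finset.range n, (σ ^ j) a = lam)
    (R : Type) [Ring R] (i : K →+* R) (x : R)
    (hcomm : ∀ c : K, x * i c = i (σ c) * x)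
    (hfree : ∀ z : R, ∃! c : ℕ →₀ K, z = c.sum fun k ck => i ck * x ^ k) :
    ∃ θ : RingQuot (fun p q : R => p = x ^ n - i lam ∧ q = 0) ≃+*
          RingQuot (fun p q : R => p = x ^ n - 1 ∧ q = 0),
      (∀ c : Fin n → K,
        θ (∑ k : Fin n, RingQuot.mkRingHom (fun p q : R => p = x ^ n - i lam ∧ q = 0)
              (i (c k) * x ^ (k : ℕ)))
          = ∑ k : Fin n, RingQuot.mkRingHom (fun p q : R => p = x ^ n - 1 ∧ q = 0)
              (i (c k * ∏ j ∈ Finset.range (k : ℕ), (σ ^ j) a) * x ^ (k : ℕ))) ∧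
      (∀ μ : K, σ μ = μ →
        θ (RingQuot.mkRingHom (fun p q : R => p = x ^ n - i lam ∧ q = 0) (i μ))
          = RingQuot.mkRingHom (fun p q : R => p = x ^ n - 1 ∧ q = 0) (i μ)) := by
  classical
  set rel1 : R → R → Prop := fun p q => p = x ^ n - i lam ∧ q = 0 with hrel1
  set rel2 : R → R → Prop := fun p q => p = x ^ n - 1 ∧ q = 0 with hrel2
  set t : ℕ → K := fun k => ∏ j ∈ Finset.range k, (σ ^ j) a with hta
  set t' : ℕ → K := fun k => ∏ j ∈ Finset.range k, (σ ^ j) a⁻¹ with ht'a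
  -- cocycle identities
  have hco : ∀ (b : K) (k m : ℕ),
      (∏ j ∈ Finset.range (k + m), (σ ^ j) b)
        = (∏ j ∈ Finset.range k, (σ ^ j) b) * (σ ^ k) (∏ j ∈ Finset.range m, (σ ^ j) b) := by
    intro b k m
    rw [Finset.prod_range_add, map_prod]
    congr 1
    exact Finset.prod_congr rfl fun j _ => (Stmt12Aux.pow_apply_comp σ k j b).symm
  have ht0 : t 0 = 1 := by simp [hta]
  have ht : ∀ k m, t (k + m) = t k * (σ ^ k) (t m) := fun k m => hco a k m
  have ht0' : t' 0 = 1 := by simp [ht'a]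
  have ht' : ∀ k m, t' (k + m) = t' k * (σ ^ k) (t' m) := fun k m => hco a⁻¹ k m
  have hinv : ∀ k, t k * t' k = 1 := by
    intro k
    rw [hta, ht'a]
    rw [← Finset.prod_mul_distrib]
    refine Finset.prod_eq_one fun j _ => ?_
    rw [← map_mul, mul_inv_cancel₀ ha, map_one]
  have hinv' : ∀ k, t' k * t k = 1 := fun k => by rw [mul_comm]; exact hinv k
  have hlam : lam ≠ 0 := by
    rw [← hnorm]
    refine Finset.prod_ne_zero_iff.mpr fun j _ => ?_
    intro h
    exact ha ((σ ^ j).injective (by simpa using h))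
  have htn : t n = lam := hnorm
  have ht'n : t' n = lam⁻¹ := by
    rw [ht'a, ← hnorm]
    rw [← Finset.prod_inv_distrib]
    exact Finset.prod_congr rfl fun j _ => map_inv₀ (σ ^ j : K ≃+* K) a
  -- the twisting automorphisms of R
  set φ : R →+* R := Stmt12Aux.phi hcomm hfree t ht0 ht with hφ
  set φ' : R →+* R := Stmt12Aux.phi hcomm hfree t' ht0' ht' with hφ'
  have hφmono : ∀ (c : K) (k : ℕ), φ (i c * x ^ k) = i (c * t k) * x ^ k :=
    Stmt12Aux.phi_mono hcomm hfree t ht0 ht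
  have hφ'mono : ∀ (c : K) (k : ℕ), φ' (i c * x ^ k) = i (c * t' k) * x ^ k :=
    Stmt12Aux.phi_mono hcomm hfree t' ht0' ht'
  have hφpow : ∀ k : ℕ, φ (x ^ k) = i (t k) * x ^ k := by
    intro k
    have : (x : R) ^ k = i 1 * x ^ k := by rw [map_one, one_mul]
    conv_lhs => rw [this]
    rw [hφmono, one_mul]
  have hφ'pow : ∀ k : ℕ, φ' (x ^ k) = i (t' k) * x ^ k := by
    intro k
    have : (x : R) ^ k = i 1 * x ^ k := by rw [map_one, one_mul]
    conv_lhs => rw [this]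
    rw [hφ'mono, one_mul]
  have hφi : ∀ c : K, φ (i c) = i c := by
    intro c
    have : i c = i c * x ^ 0 := by rw [pow_zero, mul_one]
    conv_lhs => rw [this]
    rw [hφmono, ht0, mul_one, pow_zero, mul_one]
  have hφ'i : ∀ c : K, φ' (i c) = i c := by
    intro c
    have : i c = i c * x ^ 0 := by rw [pow_zero, mul_one]
    conv_lhs => rw [this]
    rw [hφ'mono, ht0', mul_one, pow_zero, mul_one]
  -- relation preservation
  have hpres1 : ∀ ⦃p q : R⦄, rel1 p q →
      ((RingQuot.mkRingHom rel2).comp φ) p = ((RingQuot.mkRingHom rel2).comp φ) q := by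
    rintro p q ⟨hp, hq⟩
    subst hp; subst hq
    rw [map_zero]
    rw [RingHom.comp_apply, map_sub, hφpow, hφi, htn]
    have : i lam * x ^ n - i lam = i lam * (x ^ n - 1) := by rw [mul_sub, mul_one]
    rw [this, map_mul]
    have h2 : RingQuot.mkRingHom rel2 (x ^ n - 1) = 0 := by
      rw [RingQuot.mkRingHom_rel (show rel2 (x ^ n - 1) 0 from ⟨rfl, rfl⟩), map_zero]
    rw [h2, mul_zero]
  have hpres2 : ∀ ⦃p q : R⦄, rel2 p q →
      ((RingQuot.mkRingHom rel1).comp φ') p = ((RingQuot.mkRingHom rel1).comp φ') q := by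
    rintro p q ⟨hp, hq⟩
    subst hp; subst hq
    rw [map_zero]
    rw [RingHom.comp_apply, map_sub, hφ'pow, map_one, ht'n]
    have : i lam⁻¹ * x ^ n - 1 = i lam⁻¹ * (x ^ n - i lam) := by
      rw [mul_sub, ← map_mul, inv_mul_cancel₀ hlam, map_one]
    rw [this, map_mul]
    have h1 : RingQuot.mkRingHom rel1 (x ^ n - i lam) = 0 := by
      rw [RingQuot.mkRingHom_rel (show rel1 (x ^ n - i lam) 0 from ⟨rfl, rfl⟩), map_zero]
    rw [h1, mul_zero]
  set θ0 : RingQuot rel1 →+* RingQuot rel2 :=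
    RingQuot.lift ⟨(RingQuot.mkRingHom rel2).comp φ, hpres1⟩ with hθ0
  set θ0' : RingQuot rel2 →+* RingQuot rel1 :=
    RingQuot.lift ⟨(RingQuot.mkRingHom rel1).comp φ', hpres2⟩ with hθ0'
  have hθ0mk : ∀ z : R, θ0 (RingQuot.mkRingHom rel1 z) = RingQuot.mkRingHom rel2 (φ z) :=
    fun z => RingQuot.lift_mkRingHom_apply _ hpres1 z
  have hθ0'mk : ∀ z : R, θ0' (RingQuot.mkRingHom rel2 z) = RingQuot.mkRingHom rel1 (φ' z) :=
    fun z => RingQuot.lift_mkRingHom_apply _ hpres2 z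
  have hcomp1 : θ0'.comp θ0 = RingHom.id _ := by
    apply RingQuot.ringQuot_ext
    ext z
    simp only [RingHom.comp_apply, RingHom.id_apply]
    rw [hθ0mk, hθ0'mk, Stmt12Aux.phi_phi hcomm hfree t t' ht0 ht ht0' ht' hinv]
  have hcomp2 : θ0.comp θ0' = RingHom.id _ := by
    apply RingQuot.ringQuot_ext
    ext z
    simp only [RingHom.comp_apply, RingHom.id_apply]
    rw [hθ0'mk, hθ0mk, Stmt12Aux.phi_phi hcomm hfree t' t ht0' ht' ht0 ht hinv']
  refine ⟨RingEquiv.ofRingHom θ0 θ0' hcomp2 hcomp1, ?_, ?_⟩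
  · intro c
    rw [show ⇑(RingEquiv.ofRingHom θ0 θ0' hcomp2 hcomp1) = ⇑θ0 from rfl]
    rw [map_sum]
    refine Finset.sum_congr rfl fun k _ => ?_
    rw [hθ0mk, hφmono]
  · intro μ _
    rw [show ⇑(RingEquiv.ofRingHom θ0 θ0' hcomp2 hcomp1) = ⇑θ0 from rfl]
    rw [hθ0mk, hφi]
end

section
/- Let M be a field, φ an automorphism of M of finite order n with fixed field F = M^φ, and suppose μ ∈ M* satisfies N_{M/F}(μ) = λ. Then in the cyclic algebra A' = M[y;φ]/(yⁿ − λ), the element y − μ generates a proper left ideal; in particular y − μ is not invertible in A'. -/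
set_option synthInstance.maxHeartbeats 1000000
set_option maxHeartbeats 1000000

theorem aux17 (M : Type) [Field M] (φ : M ≃+* M) (n : ℕ)
    (hφn : φ ^ n = 1)
    (μ : M) (lam : M)
    (hnorm : ∏ j ∈ Finset.range n, (φ ^ j) μ = lam)
    (R : Type) [Ring R] (i : M →+* R) (y : R)
    (hcomm : ∀ c : M, y * i c = i (φ c) * y)
    (hfree : ∀ z : R, ∃! c : ℕ →₀ M, z = c.sum fun k ck => i ck * y ^ k)
    (r : RingQuot (fun p q : R => p = y ^ n - i lam ∧ q = 0)) :
    r * RingQuot.mkRingHom (fun p q : R => p = y ^ n - i lam ∧ q = 0) (y - i μ) ≠ 1 := by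
  classical
  set L : M →+* AddMonoid.End M := Module.toAddMonoidEnd M M with hLdef
  have hL : ∀ c x : M, (L c) x = c * x := fun c x => rfl
  set u : AddMonoid.End M :=
    { toFun := fun x => μ * φ x
      map_zero' := by simp
      map_add' := by intro a b; simp [mul_add] } with hudef
  have hu : ∀ x, u x = μ * φ x := fun x => rfl
  have hmulEnd : ∀ (f g : AddMonoid.End M) (x : M), (f * g) x = f (g x) := fun f g x => rfl
  have hφpow : ∀ (k : ℕ) (x : M), (φ ^ (k + 1)) x = (φ ^ k) (φ x) := by
    intro k x; rw [pow_succ]; rfl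
  have upow : ∀ (k : ℕ) (x : M),
      (u ^ k) x = (∏ j ∈ Finset.range k, (φ ^ j) μ) * (φ ^ k) x := by
    intro k
    induction k with
    | zero => intro x; simp
    | succ k ih =>
      intro x
      rw [pow_succ, hmulEnd, hu, ih, map_mul, Finset.prod_range_succ, hφpow]
      ring
  -- u^n = L lam
  have hun : u ^ n = L lam := by
    refine AddMonoid.End.ext (h := fun x => ?_)
    rw [upow, hnorm, hφn, hL]
    rfl
  -- u^k * L c = L ((φ^k) c) * u^k
  have huL : ∀ (k : ℕ) (c : M), u ^ k * L c = L ((φ ^ k) c) * u ^ k := by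
    intro k c
    refine AddMonoid.End.ext (h := fun x => ?_)
    rw [hmulEnd, hmulEnd, hL, hL, upow, upow, map_mul]
    ring
  -- y^k * i c = i ((φ^k) c) * y^k
  have hyk : ∀ (k : ℕ) (c : M), y ^ k * i c = i ((φ ^ k) c) * y ^ k := by
    intro k
    induction k with
    | zero => intro c; simp
    | succ k ih =>
      intro c
      rw [pow_succ, mul_assoc, hcomm, ← mul_assoc, ih, mul_assoc, ← pow_succ]
      first
      | rfl
      | (congr 2; rw [hφpow])
  -- coefficient function
  set co : R → (ℕ →₀ M) := fun z => (hfree z).choose with hcodef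
  have cospec : ∀ z : R, z = (co z).sum fun k ck => i ck * y ^ k := fun z => (hfree z).choose_spec.1
  have couniq : ∀ (z : R) (c : ℕ →₀ M), z = (c.sum fun k ck => i ck * y ^ k) → co z = c := by
    intro z c h
    exact ((hfree z).choose_spec.2 c h).symm
  set f0 : R → AddMonoid.End M := fun z => (co z).sum fun k ck => L ck * u ^ k with hf0def
  have f0_repr : ∀ c : ℕ →₀ M,
      f0 (c.sum fun k ck => i ck * y ^ k) = c.sum fun k ck => L ck * u ^ k := by
    intro c
    rw [hf0def]
    simp only
    rw [couniq _ c rfl]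
  have keyA : ∀ {τ : Type} (s : Finset τ) (a : τ → M) (b : τ → ℕ),
      f0 (∑ t ∈ s, i (a t) * y ^ b t) = ∑ t ∈ s, L (a t) * u ^ b t := by
    intro τ s a b
    have h1 : (∑ t ∈ s, i (a t) * y ^ b t)
        = (∑ t ∈ s, Finsupp.single (b t) (a t)).sum fun k ck => i ck * y ^ k := by
      rw [← Finsupp.sum_finsetSum_index (fun k => by simp) (fun k x y' => by rw [map_add, add_mul])]
      apply Finset.sum_congr rfl
      intro t _
      rw [Finsupp.sum_single_index (by simp)]
    have h2 : (∑ t ∈ s, L (a t) * u ^ b t)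
        = (∑ t ∈ s, Finsupp.single (b t) (a t)).sum fun k ck => L ck * u ^ k := by
      rw [← Finsupp.sum_finsetSum_index (fun k => by simp) (fun k x y' => by rw [map_add, add_mul])]
      apply Finset.sum_congr rfl
      intro t _
      rw [Finsupp.sum_single_index (by simp)]
    rw [h1, h2, f0_repr]
  -- f0 is a ring hom
  have f0_one : f0 1 = 1 := by
    have : (1 : R) = (Finsupp.single 0 1).sum fun k ck => i ck * y ^ k := by
      rw [Finsupp.sum_single_index (by simp)]; simp
    rw [this, f0_repr, Finsupp.sum_single_index (by simp)]
    simp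
  have f0_mul : ∀ z w : R, f0 (z * w) = f0 z * f0 w := by
    intro z w
    have hz := cospec z
    have hw := cospec w
    set c := co z with hc
    set d := co w with hd
    have hzw : z * w = ∑ t ∈ c.support ×ˢ d.support,
        i (c t.1 * (φ ^ t.1) (d t.2)) * y ^ (t.1 + t.2) := by
      conv_lhs => rw [hz, hw]
      rw [Finsupp.sum, Finsupp.sum, Finset.sum_mul_sum, Finset.sum_product]
      apply Finset.sum_congr rfl
      intro k _
      apply Finset.sum_congr rfl
      intro l _
      rw [map_mul, pow_add]
      rw [mul_assoc, ← mul_assoc (y ^ k), hyk]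
      simp [mul_assoc]
    have hfz : f0 z = c.sum fun k ck => L ck * u ^ k := by rw [hz, f0_repr]
    have hfw : f0 w = d.sum fun k ck => L ck * u ^ k := by rw [hw, f0_repr]
    rw [hzw]
    have := keyA (c.support ×ˢ d.support)
        (fun t => c t.1 * (φ ^ t.1) (d t.2)) (fun t => t.1 + t.2)
    rw [this, hfz, hfw, Finsupp.sum, Finsupp.sum, Finset.sum_mul_sum, Finset.sum_product]
    apply Finset.sum_congr rfl
    intro k _
    apply Finset.sum_congr rfl
    intro l _
    conv_rhs => rw [mul_assoc, ← mul_assoc (u ^ k), huL]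
    rw [map_mul, pow_add]
    simp [mul_assoc]
  have f0_zero : f0 0 = 0 := by
    have : (0 : R) = (0 : ℕ →₀ M).sum fun k ck => i ck * y ^ k := by simp
    rw [this, f0_repr]; simp
  have f0_add : ∀ z w : R, f0 (z + w) = f0 z + f0 w := by
    intro z w
    have hz := cospec z
    have hw := cospec w
    have hzw : z + w = (co z + co w).sum fun k ck => i ck * y ^ k := by
      rw [Finsupp.sum_add_index' (fun k => by simp) (fun k x y' => by rw [map_add, add_mul])]
      rw [← hz, ← hw]
    rw [hzw, f0_repr,
      Finsupp.sum_add_index' (fun k => by simp) (fun k x y' => by rw [map_add, add_mul])]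
  set fR : R →+* AddMonoid.End M :=
    { toFun := f0, map_one' := f0_one, map_mul' := f0_mul,
      map_zero' := f0_zero, map_add' := f0_add } with hfRdef
  have hfy : fR y = u := by
    show f0 y = u
    have : y = (Finsupp.single 1 1).sum fun k ck => i ck * y ^ k := by
      rw [Finsupp.sum_single_index (by simp)]; simp
    rw [this, f0_repr, Finsupp.sum_single_index (by simp)]
    simp
  have hfi : ∀ c : M, fR (i c) = L c := by
    intro c
    show f0 (i c) = L c
    have : i c = (Finsupp.single 0 c).sum fun k ck => i ck * y ^ k := by
      rw [Finsupp.sum_single_index (by simp)]; simp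
    rw [this, f0_repr, Finsupp.sum_single_index (by simp)]
    simp
  have hrel : ∀ ⦃p q : R⦄, (p = y ^ n - i lam ∧ q = 0) → fR p = fR q := by
    rintro p q ⟨hp, hq⟩
    rw [hp, hq, map_sub, map_pow, hfy, hfi, hun, map_zero, sub_self]
  set F : RingQuot (fun p q : R => p = y ^ n - i lam ∧ q = 0) →+* AddMonoid.End M :=
    RingQuot.lift ⟨fR, hrel⟩ with hFdef
  intro hcontra
  have h1 : F r * F (RingQuot.mkRingHom _ (y - i μ)) = 1 := by
    rw [← map_mul, hcontra, map_one]
  have h2 : F (RingQuot.mkRingHom _ (y - i μ)) = u - L μ := by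
    rw [hFdef, RingQuot.lift_mkRingHom_apply, map_sub, hfy, hfi]
  have h3 : (u - L μ) 1 = 0 := by
    show u 1 - L μ 1 = 0
    rw [hu, hL, map_one, mul_one]
    exact sub_self μ
  have h5 : F r ((F (RingQuot.mkRingHom _ (y - i μ))) 1) = 1 := by
    rw [← hmulEnd, h1]; rfl
  rw [h2, h3, map_zero] at h5
  exact one_ne_zero h5.symm

/-- let `φ` be an automorphism of `M` of order `n` with fixed field `F = M^φ`,
and `μ ∈ M*` with `N_{M/F}(μ) = λ`. Then in the cyclic algebra `A' = M[y;φ]/(yⁿ − λ)`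
(realized as a quotient of the skew polynomial ring, axiomatized by `y·c = φ(c)·y` and the
unique-representation property), the element `y − μ` generates a proper left ideal; in
particular `y − μ` is not invertible. -/
theorem stmt17 (M : Type) [Field M] (φ : M ≃+* M) (n : ℕ) (hn : 0 < n)
    (hord : orderOf φ = n) (μ : M) (hμ : μ ≠ 0) (lam : M)
    (hnorm : ∏ j ∈ Finset.range n, (φ ^ j) μ = lam)
    (R : Type) [Ring R] (i : M →+* R) (y : R)
    (hcomm : ∀ c : M, y * i c = i (φ c) * y)
    (hfree : ∀ z : R, ∃! c : ℕ →₀ M, z = c.sum fun k ck => i ck * y ^ k) :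
    (Submodule.span (RingQuot (fun p q : R => p = y ^ n - i lam ∧ q = 0))
        {RingQuot.mkRingHom (fun p q : R => p = y ^ n - i lam ∧ q = 0) (y - i μ)} ≠ ⊤) ∧
    ¬ IsUnit (RingQuot.mkRingHom (fun p q : R => p = y ^ n - i lam ∧ q = 0) (y - i μ)) := by
  have hφn : φ ^ n = 1 := by rw [← hord]; exact pow_orderOf_eq_one φ
  constructor
  · intro h
    have h1 : (1 : RingQuot (fun p q : R => p = y ^ n - i lam ∧ q = 0)) ∈
        Submodule.span (RingQuot (fun p q : R => p = y ^ n - i lam ∧ q = 0))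
          {RingQuot.mkRingHom (fun p q : R => p = y ^ n - i lam ∧ q = 0) (y - i μ)} := by
      rw [h]; exact Submodule.mem_top
    rcases Submodule.mem_span_singleton.mp h1 with ⟨r, hr⟩
    exact aux17 M φ n hφn μ lam hnorm R i y hcomm hfree r (by rw [← hr]; rfl)
  · rintro ⟨v, hv⟩
    refine aux17 M φ n hφn μ lam hnorm R i y hcomm hfree ↑v⁻¹ ?_
    rw [← hv]
    exact v.inv_mul
end

section
/- Let K be a field, σ an automorphism of K with fixed field F, and suppose the Galois extension K/F is cyclic of degree n generated by σ. Let α ∈ K generate a normal basis of K/F and set β = α^{−1}σ(α). Then N_{K/F}(β) = 1, and for any 0 ≤ i < j ≤ n−1 the elements σ^i(β) and σ^j(β) give distinct left ideals: the skew polynomials x − σ^i(β) and x − σ^j(β) in K[x;σ] are not left-associates (they generate distinct left ideals). -/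
set_option synthInstance.maxHeartbeats 1000000
set_option maxHeartbeats 1000000

set_option linter.unusedVariables false


lemma aux_xpow {K R : Type} [Field K] [Ring R] (σ : K ≃+* K) (i : K →+* R) (x : R)
    (hc : ∀ c : K, x * i c = i (σ c) * x) :
    ∀ (k : ℕ) (c : K), x ^ k * i c = i ((σ ^ k) c) * x ^ k := by
  intro k
  induction k with
  | zero => intro c; simp only [pow_zero, one_mul, mul_one]; rfl
  | succ k ih =>
    intro c
    rw [pow_succ, mul_assoc, hc, ← mul_assoc, ih, mul_assoc, ← pow_succ]
    congr 1

lemma aux_assoc {K R : Type} [Field K] [Ring R] (σ : K ≃+* K) (i : K →+* R) (x : R)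
    (hc : ∀ c : K, x * i c = i (σ c) * x)
    (hu : ∀ z : R, ∃! c : ℕ →₀ K, z = c.sum fun k ck => i ck * x ^ k)
    (b b' : K) (r : R) (h : x - i b = r * (x - i b')) : b = b' := by
  set f : ℕ → K → R := fun k ck => i ck * x ^ k with hf
  have hf0 : ∀ k : ℕ, f k 0 = 0 := by intro k; simp [hf]
  have hfsub : ∀ (k : ℕ) (c d : K), f k (c - d) = f k c - f k d := by
    intro k c d; simp [hf, map_sub, sub_mul]
  have inj : ∀ c1 c2 : ℕ →₀ K, c1.sum f = c2.sum f → c1 = c2 := by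
    intro c1 c2 hcc
    obtain ⟨c, hc1, hc2⟩ := hu (c1.sum f)
    exact (hc2 c1 rfl).trans (hc2 c2 hcc).symm
  obtain ⟨rep, hrep⟩ := (hu r).exists
  have hf2supp : ∀ m : ℕ, (fun m => rep m * (σ ^ m) b') m ≠ 0 → m ∈ rep.support := by
    intro m hm
    rw [Finsupp.mem_support_iff]
    intro h0
    exact hm (by show rep m * (σ ^ m) b' = 0; rw [h0, zero_mul])
  set f2 : ℕ →₀ K := Finsupp.onFinset rep.support (fun m => rep m * (σ ^ m) b') hf2supp with hf2
  set c' : ℕ →₀ K := Finsupp.mapDomain Nat.succ rep - f2 with hc'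
  have h1 : r * x = (Finsupp.mapDomain Nat.succ rep).sum f := by
    rw [Finsupp.sum_mapDomain_index (fun a => hf0 _)
      (by intro a b1 b2; simp [hf, map_add, add_mul])]
    rw [hrep, Finsupp.sum_mul]
    apply Finsupp.sum_congr
    intro k _
    show f k (rep k) * x = f (Nat.succ k) (rep k)
    simp only [hf]
    rw [mul_assoc, ← pow_succ]
  have h2 : r * i b' = f2.sum f := by
    rw [hrep, Finsupp.sum_mul, hf2, Finsupp.onFinset_sum _ (fun a => hf0 _)]
    apply Finset.sum_congr rfl
    intro k _
    show f k (rep k) * i b' = f k (rep k * (σ ^ k) b')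
    simp only [hf]
    rw [mul_assoc, aux_xpow σ i x hc, ← mul_assoc, ← map_mul]
  have hsum : x - i b = c'.sum f := by
    rw [hc', Finsupp.sum_sub_index hfsub, ← h1, ← h2, ← mul_sub, ← h]
  have hxb : x - i b = (Finsupp.single 1 1 - Finsupp.single 0 b).sum f := by
    rw [Finsupp.sum_sub_index hfsub,
      Finsupp.sum_single_index (hf0 1), Finsupp.sum_single_index (hf0 0)]
    simp [hf]
  have heq : (Finsupp.single 1 1 - Finsupp.single 0 b : ℕ →₀ K) = c' :=
    inj _ _ (hxb.symm.trans hsum)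
  have hEq : ∀ m : ℕ, (Finsupp.single 1 1 - Finsupp.single 0 b : ℕ →₀ K) m = c' m :=
    fun m => by rw [heq]
  have hc'eval : ∀ m : ℕ, c' m = Finsupp.mapDomain Nat.succ rep m - rep m * (σ ^ m) b' := by
    intro m
    rw [hc', Finsupp.sub_apply, hf2, Finsupp.onFinset_apply]
  have hmd_succ : ∀ m : ℕ, Finsupp.mapDomain Nat.succ rep (m + 1) = rep m :=
    fun m => Finsupp.mapDomain_apply Nat.succ_injective rep m
  have hmd_zero : Finsupp.mapDomain Nat.succ rep 0 = 0 :=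
    Finsupp.mapDomain_notin_range rep 0 (by simp)
  have hrep_high : ∀ m : ℕ, 1 ≤ m → rep m = 0 := by
    by_contra hcon
    push_neg at hcon
    obtain ⟨m, hm1, hm0⟩ := hcon
    have hne : rep.support.Nonempty := ⟨m, Finsupp.mem_support_iff.mpr hm0⟩
    set M := rep.support.max' hne with hM
    have hM1 : 1 ≤ M := le_trans hm1 (Finset.le_max' _ m (Finsupp.mem_support_iff.mpr hm0))
    have e := hEq (M + 1)
    have hL : (Finsupp.single 1 1 - Finsupp.single 0 b : ℕ →₀ K) (M + 1) = 0 := by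
      rw [Finsupp.sub_apply, Finsupp.single_apply, Finsupp.single_apply]
      have h1' : (1 : ℕ) ≠ M + 1 := by omega
      have h0' : (0 : ℕ) ≠ M + 1 := by omega
      simp [h1', h0']
      omega
    have hrepM1 : rep (M + 1) = 0 := by
      by_contra h0
      have := Finset.le_max' rep.support (M + 1) (Finsupp.mem_support_iff.mpr h0)
      omega
    rw [hL, hc'eval, hmd_succ, hrepM1, zero_mul, sub_zero] at e
    have hMmem : M ∈ rep.support := Finset.max'_mem _ _
    rw [Finsupp.mem_support_iff] at hMmem
    exact hMmem e.symm
  have e1 := hEq 1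
  rw [hc'eval, show (1:ℕ) = 0 + 1 from rfl, hmd_succ 0, hrep_high 1 le_rfl, zero_mul,
    sub_zero] at e1
  have hL1 : (Finsupp.single 1 1 - Finsupp.single 0 b : ℕ →₀ K) 1 = 1 := by
    simp [Finsupp.sub_apply, Finsupp.single_apply]
  rw [hL1] at e1
  have e0 := hEq 0
  rw [hc'eval, hmd_zero, zero_sub] at e0
  have hL0 : (Finsupp.single 1 1 - Finsupp.single 0 b : ℕ →₀ K) 0 = -b := by
    simp [Finsupp.sub_apply, Finsupp.single_apply]
  rw [hL0] at e0
  have : b = rep 0 * (σ ^ 0) b' := by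
    have := neg_injective e0
    exact this
  rw [← e1, one_mul, pow_zero] at this
  simpa using this

/-- let `K/F` be cyclic of degree `n` generated by `σ` (`F = K^σ`), `α` a normal
basis generator and `β = α⁻¹σ(α)`. Then `N_{K/F}(β) = 1`, and for `i ≠ j` (`0 ≤ i, j ≤ n−1`)
the skew polynomials `x − σⁱ(β)` and `x − σʲ(β)` in `K[x;σ]` generate distinct left ideals
(they are not left associates). -/
theorem stmt19 (K : Type) [Field K] (σ : K ≃+* K) (n : ℕ) (hn : 0 < n)
    (hord : orderOf σ = n)
    (α : K) (hα : α ≠ 0)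
    (hnb : LinearIndependent (fixedSubfield σ) (fun j : Fin n => (σ ^ (j : ℕ)) α))
    (β : K) (hβ : β = α⁻¹ * σ α) :
    (∏ j ∈ Finset.range n, (σ ^ j) β = 1) ∧
    (∀ (R : Type) [Ring R], ∀ (i : K →+* R) (x : R),
      (∀ c : K, x * i c = i (σ c) * x) →
      (∀ z : R, ∃! c : ℕ →₀ K, z = c.sum fun k ck => i ck * x ^ k) →
      ∀ iv jv : Fin n, iv ≠ jv →
        (Submodule.span R {x - i ((σ ^ (iv : ℕ)) β)} : Submodule R R)
          ≠ Submodule.span R {x - i ((σ ^ (jv : ℕ)) β)}) := by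
  have hαk : ∀ k : ℕ, (σ ^ k) α ≠ 0 := by
    intro k h
    exact hα ((σ ^ k).injective (h.trans (map_zero (σ ^ k)).symm))
  have hβk : ∀ k : ℕ, (σ ^ k) β = ((σ ^ k) α)⁻¹ * (σ ^ (k + 1)) α := by
    intro k
    rw [hβ, map_mul, map_inv₀]
    congr 1
  -- part 1 computation
  have key : ∀ m : ℕ, (∏ j ∈ Finset.range m, (σ ^ j) β) = α⁻¹ * (σ ^ m) α := by
    intro m
    induction m with
    | zero =>
      simp only [Finset.prod_range_zero, pow_zero]
      show (1 : K) = α⁻¹ * α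
      exact (inv_mul_cancel₀ hα).symm
    | succ m ih =>
      rw [Finset.prod_range_succ, ih, hβk]
      field_simp [hαk m, hα]
      exact mul_div_cancel_left₀ _ (hαk m)
  have part1 : (∏ j ∈ Finset.range n, (σ ^ j) β) = 1 := by
    rw [key n, ← hord, pow_orderOf_eq_one σ]
    show α⁻¹ * α = 1
    exact inv_mul_cancel₀ hα
  -- distinctness of sigma^k beta
  have hdist : ∀ iv jv : Fin n, iv ≠ jv → (σ ^ (iv : ℕ)) β ≠ (σ ^ (jv : ℕ)) β := by
    intro iv jv hij heq
    set γ := (σ ^ (iv : ℕ)) α with hγ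
    set δ := (σ ^ (jv : ℕ)) α with hδ
    have hγ0 : γ ≠ 0 := hαk _
    have hδ0 : δ ≠ 0 := hαk _
    have hsγ : (σ ^ ((iv : ℕ) + 1)) α = σ γ := by rw [hγ, pow_succ']; rfl
    have hsδ : (σ ^ ((jv : ℕ) + 1)) α = σ δ := by rw [hδ, pow_succ']; rfl
    rw [hβk, hβk, hsγ, hsδ] at heq
    have hσγ0 : σ γ ≠ 0 := fun h => hγ0 (σ.injective (h.trans (map_zero σ).symm))
    have hσδ0 : σ δ ≠ 0 := fun h => hδ0 (σ.injective (h.trans (map_zero σ).symm))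
    have hfix : σ (γ * δ⁻¹) = γ * δ⁻¹ := by
      rw [map_mul, map_inv₀]
      have heq' : γ⁻¹ * σ γ = δ⁻¹ * σ δ := heq
      rw [mul_inv_eq_iff_eq_mul₀ hσδ0]
      calc σ γ = γ * (γ⁻¹ * σ γ) := by rw [← mul_assoc, mul_inv_cancel₀ hγ0, one_mul]
        _ = γ * δ⁻¹ * σ δ := by rw [heq', mul_assoc]
    have hmem : γ * δ⁻¹ ∈ fixedSubfield σ := hfix
    set f' : fixedSubfield σ := ⟨γ * δ⁻¹, hmem⟩ with hf'
    set g : Fin n → fixedSubfield σ :=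
      fun k => (if k = iv then 1 else 0) - (if k = jv then f' else 0) with hg
    have hsum : (∑ k : Fin n, g k • (σ ^ (k : ℕ)) α) = 0 := by
      have : ∀ k : Fin n, g k • (σ ^ (k : ℕ)) α =
          (if k = iv then (σ ^ (k : ℕ)) α else 0) -
          (if k = jv then f' • (σ ^ (k : ℕ)) α else 0) := by
        intro k
        rw [hg]
        simp only [sub_smul, ite_smul, one_smul, zero_smul]
      rw [Finset.sum_congr rfl (fun k _ => this k), Finset.sum_sub_distrib,
        Finset.sum_ite_eq' Finset.univ iv, Finset.sum_ite_eq' Finset.univ jv]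
      simp only [Finset.mem_univ, if_true]
      have hsm : f' • δ = γ * δ⁻¹ * δ := rfl
      rw [hsm]
      field_simp
      exact sub_self _
    have := Fintype.linearIndependent_iff.mp hnb g hsum iv
    rw [hg] at this
    simp only [if_pos rfl, if_neg hij, sub_zero] at this
    exact one_ne_zero this
  refine ⟨part1, ?_⟩
  intro R _ i x hcomm huniq iv jv hij hspan
  have hmem : x - i ((σ ^ (iv : ℕ)) β) ∈ Submodule.span R {x - i ((σ ^ (jv : ℕ)) β)} := by
    rw [← hspan]
    exact Submodule.mem_span_singleton_self _
  obtain ⟨r, hr⟩ := Submodule.mem_span_singleton.mp hmem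
  exact hdist iv jv hij (aux_assoc σ i x hcomm huniq _ _ r (by rw [← hr, smul_eq_mul]))
end
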